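/- arXiv:1110.6628 — 5 statements merged into one kernel-verified Lean document; each statement's English description precedes it below -/
import Mathlib

section
/- Let G = G₁ *_F G₂ be a virtually cyclic group of Type II (i.e., [Gᵢ : F] = 2 for i = 1, 2 with F finite), and let φ : G₁ *_F G₂ → H be a group homomorphism whose restriction to each Gᵢ is injective. Then φ is injective if and only if the image φ(G) is infinite. -/
private lemma dihedral_rel {Q : Type*} [Group Q] {a b : Q} (ha : a ^ 2 = 1) (hb : b ^ 2 = 1)
    (j : ℤ) : a * (a * b) ^ j = (a * b) ^ (-j) * a := by
  have haa : a * a = 1 := by rw [← pow_two]; exact ha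
  have hbb : b * b = 1 := by rw [← pow_two]; exact hb
  have ha' : a⁻¹ = a := inv_eq_of_mul_eq_one_left haa
  have hb' : b⁻¹ = b := inv_eq_of_mul_eq_one_left hbb
  have h1 : (MulAut.conj a) (a * b) = (a * b)⁻¹ := by
    simp only [MulAut.conj_apply, mul_inv_rev, ha', hb']
    rw [← mul_assoc, haa, one_mul]
  have h2 := map_zpow (MulAut.conj a) (a * b) j
  rw [h1, inv_zpow, ← zpow_neg] at h2
  have h3 : a * (a * b) ^ j * a⁻¹ = (a * b) ^ (-j) := h2
  rwa [mul_inv_eq_iff_eq_mul] at h3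

private lemma form_lemma {Q : Type*} [Group Q] {a b : Q} (ha : a ^ 2 = 1) (hb : b ^ 2 = 1)
    (hc : Subgroup.closure {a, b} = ⊤) (q : Q) :
    ∃ j : ℤ, q = (a * b) ^ j ∨ q = a * (a * b) ^ j := by
  have haa : a * a = 1 := by rw [← pow_two]; exact ha
  have ha' : a⁻¹ = a := inv_eq_of_mul_eq_one_left haa
  have hrel : ∀ j : ℤ, a * (a * b) ^ j = (a * b) ^ (-j) * a := dihedral_rel ha hb
  have hrel' : ∀ j : ℤ, (a * b) ^ j * a = a * (a * b) ^ (-j) := by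
    intro j
    rw [hrel (-j), neg_neg]
  have hq : q ∈ Subgroup.closure ({a, b} : Set Q) := hc ▸ Subgroup.mem_top q
  induction hq using Subgroup.closure_induction with
  | mem x hx =>
    rcases hx with rfl | rfl
    · exact ⟨0, Or.inr (by simp)⟩
    · refine ⟨1, Or.inr ?_⟩
      rw [zpow_one, ← mul_assoc, haa, one_mul]
  | one => exact ⟨0, Or.inl (by simp)⟩
  | mul x y hx hy ihx ihy =>
    obtain ⟨i, hi | hi⟩ := ihx <;> obtain ⟨j, hj⟩ := ihy <;> subst hi <;>
      rcases hj with hj | hj <;> subst hj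
    · exact ⟨i + j, Or.inl (by rw [zpow_add])⟩
    · refine ⟨-i + j, Or.inr ?_⟩
      rw [← mul_assoc, hrel' i, mul_assoc, ← zpow_add]
    · refine ⟨i + j, Or.inr ?_⟩
      rw [mul_assoc, ← zpow_add]
    · refine ⟨-i + j, Or.inl ?_⟩
      calc a * (a * b) ^ i * (a * (a * b) ^ j)
          = a * ((a * b) ^ i * a) * (a * b) ^ j := by group
        _ = a * (a * (a * b) ^ (-i)) * (a * b) ^ j := by rw [hrel' i]
        _ = (a * b) ^ (-i) * (a * b) ^ j := by
              rw [← mul_assoc, haa, one_mul]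
        _ = (a * b) ^ (-i + j) := by rw [zpow_add]
  | inv x hx ihx =>
    obtain ⟨i, hi | hi⟩ := ihx <;> subst hi
    · exact ⟨-i, Or.inl (by rw [zpow_neg])⟩
    · refine ⟨i, Or.inr ?_⟩
      rw [mul_inv_rev, ha', ← zpow_neg, ← hrel i]

private lemma dihedral_finite {Q : Type*} [Group Q] {a b : Q} (ha : a ^ 2 = 1) (hb : b ^ 2 = 1)
    (hc : Subgroup.closure {a, b} = ⊤) {m : ℕ} (hm : m ≠ 0) (ht : (a * b) ^ m = 1) :
    Finite Q := by
  have hmpos : 0 < m := Nat.pos_of_ne_zero hm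
  apply Finite.of_surjective (fun p : Bool × Fin m => (cond p.1 a 1) * (a * b) ^ (p.2 : ℕ))
  intro q
  obtain ⟨j, hj⟩ := form_lemma ha hb hc q
  have key : ∃ k : Fin m, (a * b) ^ j = (a * b) ^ ((k : ℕ) : ℤ) := by
    have hr0 : 0 ≤ j % (m : ℤ) := Int.emod_nonneg j (by exact_mod_cast hm)
    have hrlt : j % (m : ℤ) < (m : ℤ) := Int.emod_lt_of_pos j (by exact_mod_cast hmpos)
    have hsplit : j = (m : ℤ) * (j / m) + j % m := (Int.mul_ediv_add_emod j m).symm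
    have h2 : (a * b) ^ j = (a * b) ^ (j % (m : ℤ)) := by
      conv_lhs => rw [hsplit]
      rw [zpow_add, zpow_mul]
      have hone : (a * b) ^ (m : ℤ) = 1 := by rw [zpow_natCast, ht]
      rw [hone, one_zpow, one_mul]
    refine ⟨⟨(j % (m : ℤ)).toNat, by omega⟩, ?_⟩
    rw [h2]
    congr 1
    simp [Int.toNat_of_nonneg hr0]
  obtain ⟨k, hk⟩ := key
  rcases hj with hj | hj
  · exact ⟨(false, k), by simp [hj, hk, zpow_natCast]⟩
  · exact ⟨(true, k), by simp [hj, hk, zpow_natCast]⟩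

open Monoid in
private lemma pushout_pow_ne_one {F : Type*} [Group F] {G : Bool → Type*} [∀ b, Group (G b)]
    (φ : ∀ b, F →* G b) (hinj : ∀ b, Function.Injective (φ b))
    (x : ∀ b, G b) (hx : ∀ b, x b ∉ (φ b).range) {n : ℕ} (hn : n ≠ 0) :
    (Monoid.PushoutI.of (φ := φ) true (x true) *
      Monoid.PushoutI.of (φ := φ) false (x false)) ^ n ≠ 1 := by
  classical
  set T : Monoid.PushoutI φ :=
    Monoid.PushoutI.of (φ := φ) true (x true) * Monoid.PushoutI.of (φ := φ) false (x false) with hT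
  let L : ℕ → List (Σ b, G b) := fun n =>
    Nat.rec [] (fun _ ih => ⟨true, x true⟩ :: ⟨false, x false⟩ :: ih) n
  have hLsucc : ∀ k, L (k + 1) = ⟨true, x true⟩ :: ⟨false, x false⟩ :: L k := fun _ => rfl
  have hmem : ∀ n, ∀ l ∈ L n, l = (⟨true, x true⟩ : Σ b, G b) ∨ l = ⟨false, x false⟩ := by
    intro n
    induction n with
    | zero => intro l hl; simp [L] at hl
    | succ k ih =>
      intro l hl
      rw [hLsucc k] at hl
      simp only [List.mem_cons] at hl
      rcases hl with rfl | rfl | hl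
      · exact Or.inl rfl
      · exact Or.inr rfl
      · exact ih l hl
  have hx1 : ∀ b, x b ≠ 1 := fun b h => hx b (h ▸ one_mem _)
  have hne : ∀ l ∈ L n, l.2 ≠ 1 := by
    intro l hl
    rcases hmem n l hl with rfl | rfl
    · exact hx1 true
    · exact hx1 false
  have hchain : ∀ n, (L n).IsChain (fun l l' => l.1 ≠ l'.1) ∧
      ∀ l, (L n).head? = some l → l.1 = true := by
    intro n
    induction n with
    | zero => exact ⟨List.isChain_nil, by intro l h; simp [L] at h⟩
    | succ k ih =>
      rw [hLsucc k]
      constructor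
      · rw [List.isChain_cons_cons]
        refine ⟨by simp, ?_⟩
        rw [List.isChain_cons]
        refine ⟨?_, ih.1⟩
        intro h hh
        have := ih.2 h hh
        simp [this]
      · intro l h
        simp only [List.head?_cons, Option.some.injEq] at h
        rw [← h]
  set w : Monoid.CoprodI.Word G := ⟨L n, hne, (hchain n).1⟩ with hw
  have hred : Monoid.PushoutI.Reduced φ w := by
    intro g hg
    rcases hmem n g hg with rfl | rfl
    · exact hx true
    · exact hx false
  have hprodL : ∀ m, ((L m).map (fun l => Monoid.PushoutI.of (φ := φ) l.1 l.2)).prod = T ^ m := by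
    intro m
    induction m with
    | zero => simp [L]
    | succ k ih =>
      rw [hLsucc k]
      simp only [List.map_cons, List.prod_cons]
      rw [ih, pow_succ', hT, mul_assoc]
  have hwprod : Monoid.PushoutI.ofCoprodI (φ := φ) w.prod = T ^ n := by
    rw [Monoid.CoprodI.Word.prod, map_list_prod, List.map_map, ← hprodL n]
    congr 1
  intro heq
  have h1 : Monoid.PushoutI.ofCoprodI (φ := φ) w.prod ∈ (Monoid.PushoutI.base φ).range := by
    rw [hwprod, heq]; exact one_mem _
  have h2 := hred.eq_empty_of_mem_range hinj h1
  have h3 : L n = [] := congrArg Monoid.CoprodI.Word.toList h2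
  obtain ⟨k, rfl⟩ := Nat.exists_eq_succ_of_ne_zero hn
  rw [hLsucc k] at h3
  exact List.cons_ne_nil _ _ h3

/-- Let `G = G₁ *_F G₂` be a virtually cyclic group of Type II, i.e. `F, G₁, G₂` are finite
and `F` embeds in each `Gᵢ` with index `2`. If `ψ : G₁ *_F G₂ →* H` is a homomorphism whose
restriction to each `Gᵢ` is injective, then `ψ` is injective if and only if its image is
infinite. -/
theorem stmt_5 (F : Type*) [Group F] [Finite F] (G : Bool → Type*) [∀ b, Group (G b)]
    [∀ b, Finite (G b)] (φ : ∀ b, F →* G b)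
    (hinj : ∀ b, Function.Injective (φ b))
    (hidx : ∀ b, (φ b).range.index = 2)
    (H : Type*) [Group H] (ψ : Monoid.PushoutI φ →* H)
    (hres : ∀ b, Function.Injective (ψ.comp (Monoid.PushoutI.of (φ := φ) b))) :
    Function.Injective ψ ↔ Infinite ψ.range := by
  classical
  have hex : ∀ b, ∃ xb : G b, xb ∉ (φ b).range := by
    intro b
    by_contra h
    push_neg at h
    have htop : (φ b).range = ⊤ := (Subgroup.eq_top_iff' _).2 h
    have h2 := hidx b
    rw [htop, Subgroup.index_top] at h2
    exact absurd h2 (by norm_num)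
  choose x hx using hex
  set X : ∀ b, Monoid.PushoutI φ := fun b => Monoid.PushoutI.of (φ := φ) b (x b) with hX
  set F' : Subgroup (Monoid.PushoutI φ) := (Monoid.PushoutI.base φ).range with hF'
  -- conjugation stays in the range
  have hconjR : ∀ b (g : G b), ∀ h ∈ (φ b).range, g * h * g⁻¹ ∈ (φ b).range := by
    intro b g h hh
    rw [Subgroup.mul_mem_iff_of_index_two (hidx b),
      Subgroup.mul_mem_iff_of_index_two (hidx b)]
    simp [hh, Subgroup.inv_mem_iff]
  have hF'n : F'.Normal := by
    rw [← Subgroup.normalizer_eq_top_iff, Subgroup.eq_top_iff']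
    intro g
    induction g using Monoid.PushoutI.induction_on with
    | of i g₀ =>
      rw [Subgroup.mem_normalizer_iff]
      intro h
      constructor
      · rintro ⟨f, rfl⟩
        obtain ⟨f', hf'⟩ := hconjR i g₀ (φ i f) ⟨f, rfl⟩
        refine ⟨f', ?_⟩
        rw [← Monoid.PushoutI.of_apply_eq_base φ i f', hf',
          ← Monoid.PushoutI.of_apply_eq_base φ i f]
        simp only [map_mul, map_inv]
      · rintro ⟨f, hf⟩
        obtain ⟨f'', hf''⟩ := hconjR i g₀⁻¹ (φ i f) ⟨f, rfl⟩
        refine ⟨f'', ?_⟩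
        have hh : h = (Monoid.PushoutI.of (φ := φ) i g₀)⁻¹ *
            Monoid.PushoutI.base φ f * Monoid.PushoutI.of (φ := φ) i g₀ := by
          rw [hf]; group
        rw [hh, ← Monoid.PushoutI.of_apply_eq_base φ i f'', hf'',
          ← Monoid.PushoutI.of_apply_eq_base φ i f]
        simp only [map_mul, map_inv, inv_inv]
    | base f => exact Subgroup.le_normalizer ⟨f, rfl⟩
    | mul u v hu hv => exact mul_mem hu hv
  haveI := hF'n
  set π := QuotientGroup.mk' F' with hπ
  set a : Monoid.PushoutI φ ⧸ F' := π (X true) with haq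
  set bq : Monoid.PushoutI φ ⧸ F' := π (X false) with hbq
  have hsq : ∀ b, (X b) ^ 2 ∈ F' := by
    intro b
    obtain ⟨f, hf⟩ := Subgroup.sq_mem_of_index_two (hidx b) (x b)
    refine ⟨f, ?_⟩
    rw [← Monoid.PushoutI.of_apply_eq_base φ b, hf, map_pow]
  have ha2 : a ^ 2 = 1 := by
    rw [haq, ← map_pow]
    exact (QuotientGroup.eq_one_iff _).2 (hsq true)
  have hb2 : bq ^ 2 = 1 := by
    rw [hbq, ← map_pow]
    exact (QuotientGroup.eq_one_iff _).2 (hsq false)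
  have hπbase : ∀ f : F, π (Monoid.PushoutI.base φ f) = 1 :=
    fun f => (QuotientGroup.eq_one_iff _).2 ⟨f, rfl⟩
  have hcl : Subgroup.closure ({a, bq} : Set (Monoid.PushoutI φ ⧸ F')) = ⊤ := by
    rw [Subgroup.eq_top_iff']
    intro qq
    obtain ⟨g, rfl⟩ := QuotientGroup.mk'_surjective F' qq
    induction g using Monoid.PushoutI.induction_on with
    | of i g₀ =>
      by_cases hg : g₀ ∈ (φ i).range
      · obtain ⟨f, rfl⟩ := hg
        rw [Monoid.PushoutI.of_apply_eq_base φ i, hπbase]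
        exact one_mem _
      · have h2 : g₀ * (x i)⁻¹ ∈ (φ i).range := by
          rw [Subgroup.mul_mem_iff_of_index_two (hidx i)]
          simp [hg, hx i, Subgroup.inv_mem_iff]
        obtain ⟨f, hf⟩ := h2
        have hdec : Monoid.PushoutI.of (φ := φ) i g₀ = Monoid.PushoutI.base φ f * X i := by
          rw [← Monoid.PushoutI.of_apply_eq_base φ i, hf, hX, ← map_mul]
          congr 1
          group
        rw [hdec, map_mul, hπbase, one_mul]
        cases i
        · exact Subgroup.subset_closure (by right; rfl)
        · exact Subgroup.subset_closure (by left; rfl)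
    | base f => rw [hπbase]; exact one_mem _
    | mul u v hu hv => rw [map_mul]; exact mul_mem hu hv
  constructor
  · -- injective → infinite image
    intro hψ
    have hT : ∀ m : ℕ, m ≠ 0 → (X true * X false) ^ m ≠ 1 := by
      intro m hm
      exact pushout_pow_ne_one φ hinj x hx hm
    have hinfG : Infinite (Monoid.PushoutI φ) := by
      apply Infinite.of_injective (fun m : ℕ => (X true * X false) ^ m)
      intro i j hij
      have hij' : (X true * X false) ^ i = (X true * X false) ^ j := hij
      by_contra hne
      rcases Nat.lt_or_ge i j with h | h
      · have : (X true * X false) ^ (j - i) = 1 := by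
          have h2 : (X true * X false) ^ (j - i) * (X true * X false) ^ i =
              (X true * X false) ^ i := by
            rw [← pow_add]
            rw [Nat.sub_add_cancel (le_of_lt h), hij']
          exact mul_right_cancel (h2.trans (one_mul _).symm)
        exact hT (j - i) (by omega) this
      · rcases Nat.lt_or_ge j i with h' | h'
        · have h2 : (X true * X false) ^ (i - j) * (X true * X false) ^ j =
              (X true * X false) ^ j := by
            rw [← pow_add, Nat.sub_add_cancel (le_of_lt h'), ← hij']
          exact hT (i - j) (by omega) (mul_right_cancel (h2.trans (one_mul _).symm))
        · exact hne (le_antisymm h' h)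
    exact Infinite.of_injective
      (fun g : Monoid.PushoutI φ => (⟨ψ g, g, rfl⟩ : ψ.range))
      (fun g g' h => hψ (congrArg Subtype.val h))
  · -- infinite image → injective
    intro hinf
    by_cases hNF : ψ.ker ≤ F'
    · rw [← MonoidHom.ker_eq_bot_iff ψ, eq_bot_iff]
      intro n hn
      obtain ⟨f, hf⟩ := hNF hn
      have h1 : (ψ.comp (Monoid.PushoutI.of (φ := φ) true)) (φ true f) = 1 := by
        rw [MonoidHom.comp_apply, Monoid.PushoutI.of_apply_eq_base φ true, hf]
        exact hn
      have h2 : φ true f = 1 := hres true (by rw [h1, map_one])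
      have h3 : f = 1 := hinj true (by rw [h2, map_one])
      have : n = 1 := by rw [← hf, h3, map_one]
      simp [this]
    · exfalso
      obtain ⟨n, hnk, hnF⟩ := SetLike.not_le_iff_exists.1 hNF
      set N' : Subgroup (Monoid.PushoutI φ ⧸ F') := ψ.ker.map π with hN'
      haveI hN'n : N'.Normal := Subgroup.Normal.map (MonoidHom.normal_ker ψ) π
        (QuotientGroup.mk'_surjective F')
      have hπn : π n ∈ N' := Subgroup.mem_map_of_mem π hnk
      have hπn1 : π n ≠ 1 := fun h => hnF ((QuotientGroup.eq_one_iff n).1 h)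
      obtain ⟨j, hj⟩ := form_lemma ha2 hb2 hcl (π n)
      have hm : ∃ m : ℕ, m ≠ 0 ∧ (a * bq) ^ m ∈ N' := by
        rcases hj with hj | hj
        · have hj0 : j ≠ 0 := by
            rintro rfl
            rw [zpow_zero] at hj
            exact hπn1 hj
          refine ⟨j.natAbs, Int.natAbs_ne_zero.2 hj0, ?_⟩
          have hmem : (a * bq) ^ j ∈ N' := hj ▸ hπn
          rcases Int.natAbs_eq j with h | h
          · have : (a * bq) ^ ((j.natAbs : ℕ) : ℤ) ∈ N' := by rw [← h]; exact hmem
            rwa [zpow_natCast] at this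
          · have : (a * bq) ^ ((j.natAbs : ℕ) : ℤ) ∈ N' := by
              have h2 : (a * bq) ^ j = ((a * bq) ^ ((j.natAbs : ℕ) : ℤ))⁻¹ := by
                conv_lhs => rw [h]
                rw [zpow_neg]
              rw [h2] at hmem
              exact (Subgroup.inv_mem_iff _).1 hmem
            rwa [zpow_natCast] at this
        · refine ⟨2, two_ne_zero, ?_⟩
          have h1 : (a * bq) * (π n) * (a * bq)⁻¹ ∈ N' := hN'n.conj_mem _ hπn _
          have haa : a * a = 1 := by rw [← pow_two]; exact ha2
          have hrel'2 : ∀ k : ℤ, (a * bq) ^ k * a = a * (a * bq) ^ (-k) := by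
            intro k
            rw [dihedral_rel ha2 hb2 (-k), neg_neg]
          have h2 : (π n) * ((a * bq) * (π n) * (a * bq)⁻¹) = (a * bq) ^ (-2 : ℤ) := by
            rw [hj]
            calc a * (a * bq) ^ j * ((a * bq) * (a * (a * bq) ^ j) * (a * bq)⁻¹)
                = a * ((a * bq) ^ (j + 1) * a) * (a * bq) ^ (j - 1) := by
                  rw [zpow_add_one, zpow_sub_one]; group
              _ = a * (a * (a * bq) ^ (-(j + 1))) * (a * bq) ^ (j - 1) := by
                  rw [hrel'2 (j + 1)]
              _ = (a * bq) ^ (-(j + 1)) * (a * bq) ^ (j - 1) := by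
                  rw [← mul_assoc, haa, one_mul]
              _ = (a * bq) ^ (-2 : ℤ) := by rw [← zpow_add]; ring_nf
          have h3 : (a * bq) ^ (-2 : ℤ) ∈ N' := h2 ▸ mul_mem hπn h1
          have h4 : (a * bq) ^ ((2 : ℕ) : ℤ) ∈ N' := by
            have : (a * bq) ^ (-2 : ℤ) = ((a * bq) ^ ((2 : ℕ) : ℤ))⁻¹ := by
              rw [← zpow_neg]; norm_num
            rw [this] at h3
            exact (Subgroup.inv_mem_iff _).1 h3
          rwa [zpow_natCast] at h4
      obtain ⟨m, hm0, hmN⟩ := hm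
      set π₂ := QuotientGroup.mk' N' with hπ₂
      have hfin2 : Finite ((Monoid.PushoutI φ ⧸ F') ⧸ N') := by
        apply dihedral_finite (a := π₂ a) (b := π₂ bq) (m := m)
        · rw [← map_pow, ha2, map_one]
        · rw [← map_pow, hb2, map_one]
        · rw [← Set.image_pair, ← MonoidHom.map_closure, hcl,
            Subgroup.map_top_of_surjective _ (QuotientGroup.mk'_surjective N')]
        · exact hm0
        · rw [← map_mul, ← map_pow]
          exact (QuotientGroup.eq_one_iff _).2 hmN
      have hmap : (F' ⊔ ψ.ker).map π = N' := by
        rw [Subgroup.map_sup]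
        have h1 : F'.map π = ⊥ := (Subgroup.map_eq_bot_iff F').2
          (by simp [hπ, QuotientGroup.ker_mk'])
        rw [h1, bot_sup_eq]
      haveI hsupn : (F' ⊔ ψ.ker).Normal := Subgroup.sup_normal F' ψ.ker
      haveI hmapn : ((F' ⊔ ψ.ker).map π).Normal :=
        Subgroup.Normal.map hsupn π (QuotientGroup.mk'_surjective F')
      have hfinL : Finite (Monoid.PushoutI φ ⧸ (F' ⊔ ψ.ker)) := by
        have e := QuotientGroup.quotientQuotientEquivQuotient F' (F' ⊔ ψ.ker) le_sup_left
        have e0 := QuotientGroup.quotientMulEquivOfEq hmap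
        exact Finite.of_equiv _ (e0.symm.toEquiv.trans e.toEquiv)
      haveI : Finite F' := Finite.of_surjective (Monoid.PushoutI.base φ).rangeRestrict
        (Monoid.PushoutI.base φ).rangeRestrict_surjective
      have hidx1 : (F' ⊔ ψ.ker).index ≠ 0 := by
        rw [Subgroup.index_eq_card]
        exact Nat.card_ne_zero.2 ⟨inferInstance, hfinL⟩
      have hrel0 : ψ.ker.relIndex (F' ⊔ ψ.ker) ≠ 0 := by
        rw [Subgroup.relIndex_sup_right, Subgroup.relIndex, Subgroup.index_eq_card]
        exact Nat.card_ne_zero.2 ⟨inferInstance, inferInstance⟩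
      have hker0 : ψ.ker.index ≠ 0 := by
        rw [← Subgroup.relIndex_mul_index (le_sup_right : ψ.ker ≤ F' ⊔ ψ.ker)]
        exact Nat.mul_ne_zero hrel0 hidx1
      have hfinq : Finite (Monoid.PushoutI φ ⧸ ψ.ker) := by
        apply Nat.finite_of_card_ne_zero
        rwa [← Subgroup.index_eq_card]
      have hfinr : Finite ψ.range :=
        Finite.of_equiv _ (QuotientGroup.quotientKerEquivRange ψ).toEquiv
      exact @not_finite ψ.range hinf hfinr
end

section
/- Let G₁ and G₂ be groups, each with a subgroup Hᵢ ⊆ Gᵢ of index 2, and let i₁ : H → H₁, i₂ : H → H₂ be isomorphisms from an abstract group H. Suppose the isomorphism i₂ ∘ i₁⁻¹ : H₁ → H₂ extends to an isomorphism ι : G₁ → G₂. Then the amalgamated product G₁ *_H G₂ is isomorphic to a semidirect product ℤ ⋊ G₂, where the action is given by: elements of H₂ fix a generator t of ℤ, and elements of G₂ \ H₂ send t to t⁻¹. -/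
open Monoid SemidirectProduct Multiplicative in
theorem aux_6 (H : Type*) [Group H] (G : Bool → Type*) [∀ b, Group (G b)]
    (φ : ∀ b, H →* G b)
    (hidx : ∀ b, (φ b).range.index = 2)
    (ι : G false ≃* G true) (hι : ∀ h : H, ι (φ false h) = φ true h)
    (ψ : G true →* MulAut (Multiplicative ℤ))
    (hψ₁ : ∀ g ∈ (φ true).range, ψ g = 1)
    (hψ₂ : ∀ g ∉ (φ true).range, ∀ t, ψ g t = t⁻¹) :
    Nonempty (Monoid.PushoutI φ ≃* Multiplicative ℤ ⋊[ψ] G true) := by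
  classical
  -- membership transfer along ι
  have hιmem : ∀ g : G false, ι g ∈ (φ true).range ↔ g ∈ (φ false).range := by
    intro g
    constructor
    · rintro ⟨x, hx⟩
      exact ⟨x, ι.injective (by rw [hι, hx])⟩
    · rintro ⟨x, rfl⟩
      exact ⟨x, (hι x).symm⟩
  have hmul : ∀ b, ∀ x y : G b, x * y ∈ (φ b).range ↔ (x ∈ (φ b).range ↔ y ∈ (φ b).range) :=
    fun b x y => Subgroup.mul_mem_iff_of_index_two (hidx b)
  -- pick a ∉ H₁
  obtain ⟨a, ha⟩ : ∃ a : G false, a ∉ (φ false).range := by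
    by_contra h
    push_neg at h
    have h1 : (φ false).range = ⊤ := (Subgroup.eq_top_iff' _).2 h
    have h2 := hidx false
    rw [h1, Subgroup.index_top] at h2
    simp at h2
  have hιa : ι a ∉ (φ true).range := fun h => ha ((hιmem a).1 h)
  -- merging lemmas
  have merge : ∀ g : G false, g ∈ (φ false).range →
      PushoutI.of (φ := φ) false g = PushoutI.of true (ι g) := by
    rintro g ⟨x, rfl⟩
    rw [hι, PushoutI.of_apply_eq_base, PushoutI.of_apply_eq_base]
  have merge' : ∀ g : G true, g ∈ (φ true).range →
      PushoutI.of (φ := φ) true g = PushoutI.of false (ι.symm g) := by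
    intro g hg
    have h1 : ι.symm g ∈ (φ false).range := by
      rw [← hιmem]; simpa using hg
    rw [merge _ h1]
    simp
  set t : PushoutI φ := PushoutI.of false a * (PushoutI.of true (ι a))⁻¹ with ht
  -- constancy of g ↦ of false g * (of true (ι g))⁻¹ on the complement of H₁
  have tconst : ∀ g : G false, g ∉ (φ false).range →
      PushoutI.of (φ := φ) false g * (PushoutI.of true (ι g))⁻¹ = t := by
    intro g hg
    have hmem : a⁻¹ * g ∈ (φ false).range := by
      rw [hmul]
      simp [ha, hg, Subgroup.inv_mem_iff (x := a)]
    have h1 : PushoutI.of (φ := φ) false g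
        = PushoutI.of false a * PushoutI.of true (ι (a⁻¹ * g)) := by
      rw [← merge _ hmem, ← map_mul]
      group
    rw [h1, ht]
    rw [map_mul, map_inv]
    simp [mul_assoc]
  -- conjugation relations
  have conj₁ : ∀ g ∈ (φ true).range,
      PushoutI.of (φ := φ) true g * t * (PushoutI.of true g)⁻¹ = t := by
    rintro g ⟨x, rfl⟩
    have key : PushoutI.of (φ := φ) true (φ true x) * t * (PushoutI.of true (φ true x))⁻¹
        = PushoutI.of false (φ false x * a) * (PushoutI.of true (ι (φ false x * a)))⁻¹ := by
      simp only [ht, map_mul, hι, merge _ ⟨x, rfl⟩, mul_inv_rev]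
      group
    rw [key]
    exact tconst _ (fun hmem => ha (by
      have := (hmul false (φ false x) a).1 hmem
      exact this.1 ⟨x, rfl⟩))
  have conj₂ : ∀ g ∉ (φ true).range,
      PushoutI.of (φ := φ) true g * t * (PushoutI.of true g)⁻¹ = t⁻¹ := by
    intro g hg
    have h1 : (ι a)⁻¹ * g ∈ (φ true).range := by
      rw [hmul]
      simp [hιa, hg, Subgroup.inv_mem_iff (x := ι a)]
    have h2 : g * ι a ∈ (φ true).range := by
      rw [hmul]; simp [hιa, hg]
    have e1 : ι.symm ((ι a)⁻¹ * g) = a⁻¹ * ι.symm g := by simp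
    have e2 : ι.symm (g * ι a) = ι.symm g * a := by simp
    have key : PushoutI.of (φ := φ) true g * PushoutI.of false a
        = PushoutI.of true (ι a) * PushoutI.of false (a⁻¹ * ι.symm g * a) := by
      have : PushoutI.of (φ := φ) true g
          = PushoutI.of true (ι a) * PushoutI.of true ((ι a)⁻¹ * g) := by
        rw [← map_mul]; group
      rw [this, merge' _ h1, e1, mul_assoc, ← map_mul]
    have key2 : (PushoutI.of (φ := φ) true (ι a))⁻¹ * (PushoutI.of true g)⁻¹
        = PushoutI.of false (a⁻¹ * (ι.symm g)⁻¹) := by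
      rw [← mul_inv_rev, ← map_mul, merge' _ h2, e2, ← map_inv, mul_inv_rev]
    calc PushoutI.of (φ := φ) true g * t * (PushoutI.of true g)⁻¹
        = (PushoutI.of (φ := φ) true g * PushoutI.of false a) *
          ((PushoutI.of true (ι a))⁻¹ * (PushoutI.of true g)⁻¹) := by rw [ht]; group
      _ = PushoutI.of true (ι a) * (PushoutI.of false (a⁻¹ * ι.symm g * a) *
          PushoutI.of false (a⁻¹ * (ι.symm g)⁻¹)) := by rw [key, key2]; group
      _ = PushoutI.of true (ι a) * PushoutI.of false a⁻¹ := by rw [← map_mul]; group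
      _ = t⁻¹ := by rw [ht]; simp [map_inv]
  -- the backward map
  have hcond : ∀ g : G true,
      (zpowersHom (PushoutI φ) t).comp (ψ g).toMonoidHom =
        (MulAut.conj (PushoutI.of (φ := φ) true g)).toMonoidHom.comp
          (zpowersHom (PushoutI φ) t) := by
    intro g
    apply MonoidHom.ext_mint
    simp only [MonoidHom.comp_apply, MulEquiv.coe_toMonoidHom, MulAut.conj_apply,
      zpowersHom_apply, toAdd_ofAdd, zpow_one]
    by_cases hg : g ∈ (φ true).range
    · rw [hψ₁ g hg]
      simpa using (conj₁ g hg).symm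
    · rw [hψ₂ g hg]
      simp only [ofAdd_neg, toAdd_inv, toAdd_ofAdd, zpow_neg, zpow_one]
      exact (conj₂ g hg).symm
  set ρ : Multiplicative ℤ ⋊[ψ] G true →* PushoutI φ :=
    SemidirectProduct.lift (zpowersHom (PushoutI φ) t) (PushoutI.of true) hcond with hρ
  -- the forward map on G false
  set e : G false → Multiplicative ℤ :=
    fun g => if g ∈ (φ false).range then 1 else ofAdd 1 with he
  have hef : ∀ g₁ g₂ : G false, e (g₁ * g₂) = e g₁ * ψ (ι g₁) (e g₂) := by
    intro g₁ g₂
    by_cases h1 : g₁ ∈ (φ false).range <;> by_cases h2 : g₂ ∈ (φ false).range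
    · simp only [he]
      rw [if_pos ((hmul false g₁ g₂).2 (iff_of_true h1 h2)), if_pos h1, if_pos h2]
      simp
    · simp only [he]
      rw [if_neg (fun hc => h2 (((hmul false g₁ g₂).1 hc).1 h1)), if_pos h1, if_neg h2,
        hψ₁ _ ((hιmem g₁).2 h1)]
      simp
    · simp only [he]
      rw [if_neg (fun hc => h1 (((hmul false g₁ g₂).1 hc).2 h2)), if_neg h1, if_pos h2,
        hψ₂ _ (fun hc => h1 ((hιmem g₁).1 hc))]
      simp
    · simp only [he]
      rw [if_pos ((hmul false g₁ g₂).2 (iff_of_false h1 h2)), if_neg h1, if_neg h2,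
        hψ₂ _ (fun hc => h1 ((hιmem g₁).1 hc))]
      simp
  set f₁ : G false →* Multiplicative ℤ ⋊[ψ] G true :=
    MonoidHom.mk' (fun g => SemidirectProduct.inl (e g) * SemidirectProduct.inr (ι g))
      (by
        intro g₁ g₂
        show SemidirectProduct.inl (e (g₁ * g₂)) * SemidirectProduct.inr (ι (g₁ * g₂))
          = SemidirectProduct.inl (e g₁) * SemidirectProduct.inr (ι g₁) *
            (SemidirectProduct.inl (e g₂) * SemidirectProduct.inr (ι g₂))
        rw [hef, map_mul, map_mul]
        rw [SemidirectProduct.inl_aut]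
        group
        rw [mul_assoc, zpow_neg_one, ← map_mul, inv_mul_cancel_left]) with hf₁
  set fs : ∀ b : Bool, G b →* Multiplicative ℤ ⋊[ψ] G true :=
    fun b => Bool.rec f₁ SemidirectProduct.inr b with hfs
  have hf : ∀ b, (fs b).comp (φ b) = SemidirectProduct.inr.comp (φ true) := by
    intro b
    cases b
    · refine MonoidHom.ext fun x => ?_
      show f₁ (φ false x) = SemidirectProduct.inr (φ true x)
      rw [hf₁]
      simp only [MonoidHom.mk'_apply, he]
      rw [if_pos ⟨x, rfl⟩, hι]
      simp
    · rfl
  set θ : PushoutI φ →* Multiplicative ℤ ⋊[ψ] G true := PushoutI.lift fs _ hf with hθ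
  have θof_true : ∀ g : G true, θ (PushoutI.of true g) = SemidirectProduct.inr g :=
    fun g => PushoutI.lift_of fs _ hf g
  have θof_false : ∀ g : G false,
      θ (PushoutI.of false g) = SemidirectProduct.inl (e g) * SemidirectProduct.inr (ι g) :=
    fun g => PushoutI.lift_of fs _ hf g
  have ρt : ρ (SemidirectProduct.inl (ofAdd 1)) = t := by
    rw [hρ]
    simp [zpowersHom_apply]
  -- ρ ∘ θ = id
  have h1 : ρ.comp θ = MonoidHom.id _ := by
    apply PushoutI.hom_ext
    · intro b
      cases b
      · refine MonoidHom.ext fun g => ?_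
        simp only [MonoidHom.comp_apply, MonoidHom.id_apply, θof_false, map_mul]
        rw [hρ]
        simp only [SemidirectProduct.lift_inl, SemidirectProduct.lift_inr]
        by_cases hg : g ∈ (φ false).range
        · rw [he]
          simp only [if_pos hg, map_one, one_mul]
          exact (merge g hg).symm
        · rw [he]
          simp only [if_neg hg, zpowersHom_apply, toAdd_ofAdd, zpow_one]
          rw [← tconst g hg]
          group
      · refine MonoidHom.ext fun g => ?_
        simp only [MonoidHom.comp_apply, MonoidHom.id_apply, θof_true]
        rw [hρ]
        simp
    · refine MonoidHom.ext fun x => ?_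
      simp only [MonoidHom.comp_apply, MonoidHom.id_apply, ← PushoutI.of_apply_eq_base (φ := φ) true x,
        θof_true]
      rw [hρ]
      simp
  -- θ ∘ ρ = id
  have h2 : θ.comp ρ = MonoidHom.id _ := by
    apply SemidirectProduct.hom_ext
    · apply MonoidHom.ext_mint
      simp only [MonoidHom.comp_apply, MonoidHom.id_apply, ρt, ht, map_mul, map_inv,
        θof_true, θof_false, he]
      rw [if_neg ha]
      group
    · refine MonoidHom.ext fun g => ?_
      simp only [MonoidHom.comp_apply, MonoidHom.id_apply]
      rw [hρ]
      simp only [SemidirectProduct.lift_inr, θof_true]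
  exact ⟨MonoidHom.toMulEquiv θ ρ h1 h2⟩

/-- Let `G₁, G₂` be groups with subgroups `H₁ = (φ false).range`, `H₂ = (φ true).range` of
index `2`, both isomorphic to an abstract group `H` via the embeddings `φ b : H →* G b`.
If the isomorphism `i₂ ∘ i₁⁻¹ : H₁ → H₂` extends to an isomorphism `ι : G₁ ≃* G₂`, then the
amalgamated product `G₁ *_H G₂` is isomorphic to a semidirect product `ℤ ⋊ G₂`, where
elements of `H₂` fix a generator `t` of `ℤ` and elements of `G₂ \ H₂` invert it. -/
theorem stmt_6 (H : Type*) [Group H] (G : Bool → Type*) [∀ b, Group (G b)]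
    (φ : ∀ b, H →* G b)
    (hinj : ∀ b, Function.Injective (φ b))
    (hidx : ∀ b, (φ b).range.index = 2)
    (ι : G false ≃* G true) (hι : ∀ h : H, ι (φ false h) = φ true h) :
    ∃ ψ : G true →* MulAut (Multiplicative ℤ),
      (∀ g : G true,
        (g ∈ (φ true).range → ∀ t, ψ g t = t) ∧
        (g ∉ (φ true).range → ∀ t, ψ g t = t⁻¹)) ∧
      Nonempty (Monoid.PushoutI φ ≃* Multiplicative ℤ ⋊[ψ] G true) := by
  classical
  set invAut : MulAut (Multiplicative ℤ) :=
    { toFun := fun x => x⁻¹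
      invFun := fun x => x⁻¹
      left_inv := fun x => inv_inv x
      right_inv := fun x => inv_inv x
      map_mul' := fun x y => mul_inv x y } with hinv
  have hmul : ∀ x y : G true, x * y ∈ (φ true).range ↔
      (x ∈ (φ true).range ↔ y ∈ (φ true).range) :=
    fun x y => Subgroup.mul_mem_iff_of_index_two (hidx true)
  refine ⟨MonoidHom.mk' (fun g => if g ∈ (φ true).range then 1 else invAut) ?_, ?_, ?_⟩
  · intro g₁ g₂
    show (if g₁ * g₂ ∈ (φ true).range then 1 else invAut)
      = (if g₁ ∈ (φ true).range then 1 else invAut) *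
        (if g₂ ∈ (φ true).range then 1 else invAut)
    by_cases h1 : g₁ ∈ (φ true).range <;> by_cases h2 : g₂ ∈ (φ true).range
    · rw [if_pos h1, if_pos h2, if_pos ((hmul _ _).2 (iff_of_true h1 h2)), one_mul]
    · rw [if_pos h1, if_neg h2, if_neg (fun hc => h2 (((hmul _ _).1 hc).1 h1)), one_mul]
    · rw [if_neg h1, if_pos h2, if_neg (fun hc => h1 (((hmul _ _).1 hc).2 h2)), mul_one]
    · rw [if_neg h1, if_neg h2, if_pos ((hmul _ _).2 (iff_of_false h1 h2))]
      refine MulEquiv.ext fun x => ?_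
      rw [MulAut.mul_apply]
      exact (inv_inv x).symm
  · intro g
    constructor
    · intro hg tt
      simp only [MonoidHom.mk'_apply, if_pos hg]
      rfl
    · intro hg tt
      simp only [MonoidHom.mk'_apply, if_neg hg]
      rfl
  · refine aux_6 H G φ hidx ι hι _ ?_ ?_
    · intro g hg
      simp only [MonoidHom.mk'_apply, if_pos hg]
    · intro g hg tt
      simp only [MonoidHom.mk'_apply, if_neg hg]
      rfl
end

section
/- Let G be a group with a unique element x of order 2 and let p : G → G/⟨x⟩ be the canonical projection. If H is a subgroup of G isomorphic to a semidirect product F ⋊_θ ℤ with F a finite subgroup of G, then p(H) is isomorphic to p(F) ⋊_θ' ℤ, where θ'(1) is the automorphism of p(F) induced by θ(1) (i.e., θ'(1)(p(f)) = p(θ(1)(f)) for all f ∈ F). -/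
/-- Let `G` be a group with a unique element `x` of order `2` and canonical projection
`p : G → G' = G/⟨x⟩`. If `H` is a subgroup of `G` which is a semidirect product
`F ⋊_θ ℤ`, where `F ≤ H` is a finite subgroup of `G` and the isomorphism restricts to
the identity on `F`, then `p(H)` is isomorphic to `p(F) ⋊_θ' ℤ` where `θ'(1)` is the
automorphism of `p(F)` induced by `θ(1)`, i.e. `θ'(1)(p(f)) = p(θ(1)(f))` for `f ∈ F`. -/
theorem stmt_9 (G G' : Type*) [Group G] [Group G'] (x : G)
    (hx : orderOf x = 2) (huniq : ∀ y : G, orderOf y = 2 → y = x)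
    (p : G →* G') (hsurj : Function.Surjective p)
    (hker : p.ker = Subgroup.zpowers x)
    (F H : Subgroup G) (hFH : F ≤ H) (hFfin : Finite F)
    (θ : MulAut F)
    (e : H ≃* F ⋊[zpowersHom (MulAut F) θ] Multiplicative ℤ)
    (hcompat : ∀ f : F, e ⟨(f : G), hFH f.2⟩ = SemidirectProduct.inl f) :
    ∃ θ' : MulAut (F.map p),
      (∀ f : F, (θ' ⟨p f, Subgroup.mem_map_of_mem p f.2⟩ : G') = p (θ f)) ∧
      Nonempty (H.map p ≃*
        (F.map p) ⋊[zpowersHom (MulAut (F.map p)) θ'] Multiplicative ℤ) := by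
  have hx1 : x ≠ 1 := by
    intro h; rw [h, orderOf_one] at hx; omega
  have hx2 : x * x = 1 := by
    have := pow_orderOf_eq_one x; rw [hx, pow_two] at this; exact this
  have hpx : p x = 1 := by
    have : x ∈ p.ker := by rw [hker]; exact Subgroup.mem_zpowers x
    exact this
  -- an element whose square is 1 is 1 or x
  have hsq : ∀ g : G, g * g = 1 → g = 1 ∨ g = x := by
    intro g hg
    have hdvd : orderOf g ∣ 2 := orderOf_dvd_of_pow_eq_one (by rwa [pow_two])
    rcases (Nat.dvd_prime Nat.prime_two).mp hdvd with h | h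
    · exact Or.inl (orderOf_eq_one_iff.mp h)
    · exact Or.inr (huniq g h)
  -- elements of the kernel of p are 1 or x
  have hmem2 : ∀ g : G, p g = 1 → g = 1 ∨ g = x := by
    intro g hg
    have hgk : g ∈ Subgroup.zpowers x := by rw [← hker]; exact hg
    obtain ⟨k, rfl⟩ := hgk
    refine hsq _ ?_
    have hx2' : x ^ (2:ℤ) = 1 := by
      rw [show (2:ℤ) = ((2:ℕ):ℤ) from rfl, zpow_natCast, pow_two]; exact hx2
    rw [← zpow_add, show k + k = 2 * k by ring, zpow_mul, hx2', one_zpow]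
  -- the projection q : F →* F.map p
  let q : F →* F.map p := (p.comp F.subtype).codRestrict (F.map p)
    (fun f => Subgroup.mem_map_of_mem p f.2)
  have hqc : ∀ f : F, (q f : G') = p f := fun f => rfl
  have hqsurj : Function.Surjective q := by
    rintro ⟨_, g, hg, rfl⟩; exact ⟨⟨g, hg⟩, rfl⟩
  have hqker : ∀ f : F, q f = 1 ↔ ((f : G) = 1 ∨ (f : G) = x) := by
    intro f
    constructor
    · intro h
      exact hmem2 _ (by rw [← hqc f, h]; rfl)
    · rintro (h | h) <;> [skip; skip] <;>
      · apply Subtype.ext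
        rw [hqc f, h]
        first | exact map_one p | exact hpx
  -- any automorphism of F maps the kernel of q into itself
  have hpres : ∀ (σ : MulAut F) (f : F), q f = 1 → q (σ f) = 1 := by
    intro σ f hf
    rcases (hqker f).1 hf with h | h
    · have : f = 1 := Subtype.ext h
      rw [this, map_one, map_one]
    · refine (hqker _).2 ?_
      refine Or.imp ?_ ?_ (hsq (σ f : G) ?_) <;> try exact id
      have hff : f * f = 1 := Subtype.ext (by push_cast; rw [h]; exact hx2)
      have : σ f * σ f = 1 := by rw [← map_mul, hff, map_one]
      exact_mod_cast congrArg (Subtype.val) this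
  -- descend automorphisms of F to F.map p
  let e1 : F ⧸ q.ker ≃* F.map p := QuotientGroup.quotientKerEquivOfSurjective q hqsurj
  have he1 : ∀ f : F, e1 (QuotientGroup.mk f) = q f := fun f => rfl
  have he1s : ∀ f : F, e1.symm (q f) = QuotientGroup.mk f := by
    intro f; rw [MulEquiv.symm_apply_eq]; exact (he1 f).symm
  have hkerle : ∀ σ : MulAut F, q.ker ≤ (q.comp σ.toMonoidHom).ker := fun σ f hf =>
    show q (σ f) = 1 from hpres σ f hf
  let lift : MulAut F → (F.map p →* F.map p) := fun σ =>
    (QuotientGroup.lift q.ker (q.comp σ.toMonoidHom) (hkerle σ)).comp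
      e1.symm.toMonoidHom
  have hlift : ∀ (σ : MulAut F) (f : F), lift σ (q f) = q (σ f) := by
    intro σ f
    show (QuotientGroup.lift q.ker (q.comp σ.toMonoidHom) (hkerle σ)) (e1.symm (q f)) = q (σ f)
    rw [he1s f]
    rfl
  -- inverse pairs
  have hinv : ∀ σ : MulAut F, (lift σ⁻¹).comp (lift σ) = MonoidHom.id _ := by
    intro σ
    refine MonoidHom.ext fun b => ?_
    obtain ⟨f, rfl⟩ := hqsurj b
    show lift σ⁻¹ (lift σ (q f)) = q f
    rw [hlift, hlift]
    congr 1
    simp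
  let θ' : MulAut (F.map p) := MonoidHom.toMulEquiv (lift θ) (lift θ⁻¹)
    (hinv θ) (by simpa using hinv θ⁻¹)
  have hθ' : ∀ f : F, θ' (q f) = q (θ f) := fun f => hlift θ f
  have hθ'inv : ∀ f : F, θ'⁻¹ (q f) = q (θ⁻¹ f) := fun f => hlift θ⁻¹ f
  -- powers commute
  have hcommn : ∀ (n : ℤ) (f : F), (θ' ^ n) (q f) = q ((θ ^ n) f) := by
    intro n
    induction n using Int.induction_on with
    | zero => intro f; simp
    | succ k ih =>
      intro f
      rw [zpow_add_one, zpow_add_one, MulAut.mul_apply, MulAut.mul_apply, hθ', ih]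
    | pred k ih =>
      intro f
      rw [zpow_sub_one, zpow_sub_one, MulAut.mul_apply, MulAut.mul_apply, hθ'inv, ih]
  -- the semidirect product map
  have hcomp : ∀ g : Multiplicative ℤ,
      q.comp ((zpowersHom (MulAut F) θ g)).toMonoidHom =
      ((zpowersHom (MulAut (F.map p)) θ' (MonoidHom.id (Multiplicative ℤ) g))).toMonoidHom.comp q := by
    intro g
    ext f
    simp only [MonoidHom.comp_apply, MulEquiv.coe_toMonoidHom, MonoidHom.id_apply,
      zpowersHom_apply]
    exact congrArg Subtype.val (hcommn g.toAdd f).symm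
  let Φ : H →* (F.map p) ⋊[zpowersHom (MulAut (F.map p)) θ'] Multiplicative ℤ :=
    (SemidirectProduct.map q (MonoidHom.id (Multiplicative ℤ)) hcomp).comp e.toMonoidHom
  have hΦsurj : Function.Surjective Φ := by
    rintro ⟨b, n⟩
    obtain ⟨f, rfl⟩ := hqsurj b
    refine ⟨e.symm ⟨f, n⟩, ?_⟩
    show SemidirectProduct.map q (MonoidHom.id (Multiplicative ℤ)) hcomp (e (e.symm ⟨f, n⟩)) = _
    rw [MulEquiv.apply_symm_apply]
    rfl
  -- the projection ψ : H →* H.map p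
  let ψ : H →* H.map p := (p.comp H.subtype).codRestrict (H.map p)
    (fun h => Subgroup.mem_map_of_mem p h.2)
  have hψsurj : Function.Surjective ψ := by
    rintro ⟨_, g, hg, rfl⟩; exact ⟨⟨g, hg⟩, rfl⟩
  have hψker : ∀ h : H, ψ h = 1 ↔ p (h : G) = 1 := by
    intro h
    constructor
    · intro hh; exact congrArg Subtype.val hh
    · intro hh; exact Subtype.ext hh
  -- elements with right-component 1 are inl of their left component
  have hinl : ∀ (g : F ⋊[zpowersHom (MulAut F) θ] Multiplicative ℤ),
      g.right = 1 → g = SemidirectProduct.inl g.left := by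
    intro g hg
    ext
    · rfl
    · simp [hg]
  -- kernels agree
  have hkereq : ψ.ker = Φ.ker := by
    ext h
    simp only [MonoidHom.mem_ker]
    constructor
    · intro hh
      rcases hmem2 _ ((hψker h).1 hh) with h1 | h1
      · have : h = 1 := Subtype.ext h1
        rw [this, map_one]
      · -- (h : G) = x
        have hh2 : h * h = 1 := Subtype.ext (by push_cast; rw [h1]; exact hx2)
        have he2 : e h * e h = 1 := by rw [← map_mul, hh2, map_one]
        have hr : (e h).right = 1 := by
          have : (e h).right * (e h).right = 1 := by
            rw [← SemidirectProduct.mul_right, he2]; rfl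
          have h2 : (e h).right.toAdd + (e h).right.toAdd = 0 := by
            exact_mod_cast congrArg Multiplicative.toAdd this
          have : (e h).right.toAdd = 0 := by omega
          exact Multiplicative.toAdd.injective this
        have heh : e h = SemidirectProduct.inl (e h).left := hinl _ hr
        set f := (e h).left with hf
        have hhf : h = ⟨(f : G), hFH f.2⟩ := e.injective (by rw [heh, hcompat f])
        have hfx : (f : G) = x := by rw [hhf] at h1; exact h1
        have hqf : q f = 1 := (hqker f).2 (Or.inr hfx)
        show SemidirectProduct.map q (MonoidHom.id (Multiplicative ℤ)) hcomp (e h) = 1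
        rw [heh, SemidirectProduct.map_inl, hqf, map_one]
    · intro hh
      have hr : (e h).right = 1 := by
        have := congrArg SemidirectProduct.right hh
        simpa [Φ] using this
      have heh : e h = SemidirectProduct.inl (e h).left := hinl _ hr
      set f := (e h).left with hf
      have hhf : h = ⟨(f : G), hFH f.2⟩ := e.injective (by rw [heh, hcompat f])
      have hql : q f = 1 := by
        have := congrArg SemidirectProduct.left hh
        simpa [Φ, heh] using this
      refine (hψker h).2 ?_
      rw [hhf]
      exact congrArg Subtype.val hql
  refine ⟨θ', fun f => congrArg Subtype.val (hθ' f), ?_⟩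
  exact ⟨((QuotientGroup.quotientKerEquivOfSurjective ψ hψsurj).symm.trans
    (QuotientGroup.quotientMulEquivOfEq hkereq)).trans
    (QuotientGroup.quotientKerEquivOfSurjective Φ hΦsurj)⟩
end

section
/- Up to isomorphism, there are exactly three semidirect products of the quaternion group Q₈ by ℤ: the direct product Q₈ × ℤ, the semidirect product Q₈ ⋊_α ℤ where α(1) cyclically permutes i, j, k, and the semidirect product Q₈ ⋊_β ℤ where β(1) sends i to k and j to j⁻¹. In particular, for any θ : ℤ → Aut(Q₈), the group Q₈ ⋊_θ ℤ is isomorphic to one of these three groups. -/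
namespace Stmt11

open QuaternionGroup SemidirectProduct Multiplicative

abbrev Q : Type := QuaternionGroup 2

/-- the 3-cycle automorphism i ↦ j ↦ k ↦ i -/
def afun : Q → Q
  | .a k => if k = 1 then .xa 0 else if k = 3 then .xa 2 else .a k
  | .xa k => if k = 0 then .xa 3 else if k = 2 then .xa 1 else if k = 3 then .a 1 else .a 3

def ainv : Q → Q
  | .a k => if k = 1 then .xa 3 else if k = 3 then .xa 1 else .a k
  | .xa k => if k = 0 then .a 1 else if k = 2 then .a 3 else if k = 3 then .xa 0 else .xa 2

def ae : MulAut Q :=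
  { toFun := afun, invFun := ainv,
    left_inv := by decide, right_inv := by decide, map_mul' := by decide }

/-- the automorphism i ↦ k, j ↦ j⁻¹, k ↦ i -/
def bfun : Q → Q
  | .a k => if k = 1 then .xa 3 else if k = 3 then .xa 1 else .a k
  | .xa k => if k = 0 then .xa 2 else if k = 2 then .xa 0 else if k = 3 then .a 1 else .a 3

def be : MulAut Q :=
  { toFun := bfun, invFun := bfun,
    left_inv := by decide, right_inv := by decide, map_mul' := by decide }

lemma hom_ext_gen {M : Type*} [Monoid M] {f g : Q →* M}
    (h1 : f (a 1) = g (a 1)) (h2 : f (xa 0) = g (xa 0)) : f = g := by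
  have hc : ∀ x : Q, x = a 0 ∨ x = a 1 ∨ x = a 2 ∨ x = a 3 ∨
      x = xa 0 ∨ x = xa 1 ∨ x = xa 2 ∨ x = xa 3 := by decide
  ext x
  rcases hc x with h|h|h|h|h|h|h|h <;> subst h
  · rw [show (a 0 : Q) = 1 from by decide, map_one, map_one]
  · exact h1
  · rw [show (a 2 : Q) = a 1 * a 1 from by decide]; simp only [map_mul, h1]
  · rw [show (a 3 : Q) = a 1 * (a 1 * a 1) from by decide]; simp only [map_mul, h1]
  · exact h2
  · rw [show (xa 1 : Q) = xa 0 * a 1 from by decide]; simp only [map_mul, h1, h2]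
  · rw [show (xa 2 : Q) = xa 0 * (a 1 * a 1) from by decide]; simp only [map_mul, h1, h2]
  · rw [show (xa 3 : Q) = xa 0 * (a 1 * (a 1 * a 1)) from by decide]
    simp only [map_mul, h1, h2]

lemma aut_ext_gen {f g : MulAut Q} (h1 : f (a 1) = g (a 1)) (h2 : f (xa 0) = g (xa 0)) :
    f = g := by
  have := hom_ext_gen (f := f.toMonoidHom) (g := g.toMonoidHom) h1 h2
  ext x
  exact congrArg (fun (F : Q →* Q) => F x) this

lemma classify (θ : MulAut Q) :
    ∃ (σ : MulAut Q) (c : Q),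
      θ = σ⁻¹ * MulAut.conj c⁻¹ * 1 * σ ∨
      θ = σ⁻¹ * MulAut.conj c⁻¹ * ae * σ ∨
      θ = σ⁻¹ * MulAut.conj c⁻¹ * be * σ := by
  have hcases : ∀ x : Q, x = a 0 ∨ x = a 1 ∨ x = a 2 ∨ x = a 3 ∨
      x = xa 0 ∨ x = xa 1 ∨ x = xa 2 ∨ x = xa 3 := by decide
  rcases hcases (θ (a 1)) with e1|e1|e1|e1|e1|e1|e1|e1
  · exact absurd (θ.injective ((e1.trans (by decide : (a 0 : Q) = 1)).trans (map_one θ).symm)) (by decide)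
  · rcases hcases (θ (xa 0)) with e2|e2|e2|e2|e2|e2|e2|e2
    · exact absurd (θ.injective ((e2.trans (by decide : (a 0 : Q) = 1)).trans (map_one θ).symm)) (by decide)
    · exact absurd (θ.injective (e1.trans e2.symm)) (by decide)
    · have h2 : θ (a 2) = 1 := by
        rw [show (a 2 : Q) = xa 0 * xa 0 from by decide, map_mul, e2]; decide
      exact absurd (θ.injective (h2.trans (map_one θ).symm)) (by decide)
    · have h3 : θ (a 3) = θ (xa 0) := by
        rw [show (a 3 : Q) = a 1 * (a 1 * a 1) from by decide, map_mul, map_mul, e1, e2]; decide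
      exact absurd (θ.injective h3) (by decide)
    · exact ⟨(1 : MulAut Q), a 0, Or.inl (aut_ext_gen (by rw [e1]; decide) (by rw [e2]; decide))⟩
    · exact ⟨ae, xa 1, Or.inr (Or.inr (aut_ext_gen (by rw [e1]; decide) (by rw [e2]; decide)))⟩
    · exact ⟨(1 : MulAut Q), a 1, Or.inl (aut_ext_gen (by rw [e1]; decide) (by rw [e2]; decide))⟩
    · exact ⟨ae, a 1, Or.inr (Or.inr (aut_ext_gen (by rw [e1]; decide) (by rw [e2]; decide)))⟩
  · have h2 : θ (a 2) = 1 := by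
      rw [show (a 2 : Q) = a 1 * a 1 from by decide, map_mul, e1]; decide
    exact absurd (θ.injective (h2.trans (map_one θ).symm)) (by decide)
  · rcases hcases (θ (xa 0)) with e2|e2|e2|e2|e2|e2|e2|e2
    · exact absurd (θ.injective ((e2.trans (by decide : (a 0 : Q) = 1)).trans (map_one θ).symm)) (by decide)
    · have h3 : θ (a 3) = θ (xa 0) := by
        rw [show (a 3 : Q) = a 1 * (a 1 * a 1) from by decide, map_mul, map_mul, e1, e2]; decide
      exact absurd (θ.injective h3) (by decide)
    · have h2 : θ (a 2) = 1 := by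
        rw [show (a 2 : Q) = xa 0 * xa 0 from by decide, map_mul, e2]; decide
      exact absurd (θ.injective (h2.trans (map_one θ).symm)) (by decide)
    · exact absurd (θ.injective (e1.trans e2.symm)) (by decide)
    · exact ⟨(1 : MulAut Q), xa 0, Or.inl (aut_ext_gen (by rw [e1]; decide) (by rw [e2]; decide))⟩
    · exact ⟨ae, xa 0, Or.inr (Or.inr (aut_ext_gen (by rw [e1]; decide) (by rw [e2]; decide)))⟩
    · exact ⟨(1 : MulAut Q), xa 1, Or.inl (aut_ext_gen (by rw [e1]; decide) (by rw [e2]; decide))⟩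
    · exact ⟨ae, a 0, Or.inr (Or.inr (aut_ext_gen (by rw [e1]; decide) (by rw [e2]; decide)))⟩
  · rcases hcases (θ (xa 0)) with e2|e2|e2|e2|e2|e2|e2|e2
    · exact absurd (θ.injective ((e2.trans (by decide : (a 0 : Q) = 1)).trans (map_one θ).symm)) (by decide)
    · exact ⟨(ae*ae), a 0, Or.inr (Or.inr (aut_ext_gen (by rw [e1]; decide) (by rw [e2]; decide)))⟩
    · have h2 : θ (a 2) = 1 := by
        rw [show (a 2 : Q) = xa 0 * xa 0 from by decide, map_mul, e2]; decide
      exact absurd (θ.injective (h2.trans (map_one θ).symm)) (by decide)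
    · exact ⟨(ae*ae), a 1, Or.inr (Or.inr (aut_ext_gen (by rw [e1]; decide) (by rw [e2]; decide)))⟩
    · exact absurd (θ.injective (e1.trans e2.symm)) (by decide)
    · exact ⟨(1 : MulAut Q), xa 0, Or.inr (Or.inl (aut_ext_gen (by rw [e1]; decide) (by rw [e2]; decide)))⟩
    · have h3 : θ (a 3) = θ (xa 0) := by
        rw [show (a 3 : Q) = a 1 * (a 1 * a 1) from by decide, map_mul, map_mul, e1, e2]; decide
      exact absurd (θ.injective h3) (by decide)
    · exact ⟨(1 : MulAut Q), a 0, Or.inr (Or.inl (aut_ext_gen (by rw [e1]; decide) (by rw [e2]; decide)))⟩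
  · rcases hcases (θ (xa 0)) with e2|e2|e2|e2|e2|e2|e2|e2
    · exact absurd (θ.injective ((e2.trans (by decide : (a 0 : Q) = 1)).trans (map_one θ).symm)) (by decide)
    · exact ⟨be, xa 0, Or.inr (Or.inl (aut_ext_gen (by rw [e1]; decide) (by rw [e2]; decide)))⟩
    · have h2 : θ (a 2) = 1 := by
        rw [show (a 2 : Q) = xa 0 * xa 0 from by decide, map_mul, e2]; decide
      exact absurd (θ.injective (h2.trans (map_one θ).symm)) (by decide)
    · exact ⟨be, xa 1, Or.inr (Or.inl (aut_ext_gen (by rw [e1]; decide) (by rw [e2]; decide)))⟩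
    · exact ⟨(1 : MulAut Q), a 1, Or.inr (Or.inr (aut_ext_gen (by rw [e1]; decide) (by rw [e2]; decide)))⟩
    · exact absurd (θ.injective (e1.trans e2.symm)) (by decide)
    · exact ⟨(1 : MulAut Q), xa 0, Or.inr (Or.inr (aut_ext_gen (by rw [e1]; decide) (by rw [e2]; decide)))⟩
    · have h3 : θ (a 3) = θ (xa 0) := by
        rw [show (a 3 : Q) = a 1 * (a 1 * a 1) from by decide, map_mul, map_mul, e1, e2]; decide
      exact absurd (θ.injective h3) (by decide)
  · rcases hcases (θ (xa 0)) with e2|e2|e2|e2|e2|e2|e2|e2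
    · exact absurd (θ.injective ((e2.trans (by decide : (a 0 : Q) = 1)).trans (map_one θ).symm)) (by decide)
    · exact ⟨(ae*ae), xa 1, Or.inr (Or.inr (aut_ext_gen (by rw [e1]; decide) (by rw [e2]; decide)))⟩
    · have h2 : θ (a 2) = 1 := by
        rw [show (a 2 : Q) = xa 0 * xa 0 from by decide, map_mul, e2]; decide
      exact absurd (θ.injective (h2.trans (map_one θ).symm)) (by decide)
    · exact ⟨(ae*ae), xa 0, Or.inr (Or.inr (aut_ext_gen (by rw [e1]; decide) (by rw [e2]; decide)))⟩
    · have h3 : θ (a 3) = θ (xa 0) := by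
        rw [show (a 3 : Q) = a 1 * (a 1 * a 1) from by decide, map_mul, map_mul, e1, e2]; decide
      exact absurd (θ.injective h3) (by decide)
    · exact ⟨(1 : MulAut Q), a 1, Or.inr (Or.inl (aut_ext_gen (by rw [e1]; decide) (by rw [e2]; decide)))⟩
    · exact absurd (θ.injective (e1.trans e2.symm)) (by decide)
    · exact ⟨(1 : MulAut Q), xa 1, Or.inr (Or.inl (aut_ext_gen (by rw [e1]; decide) (by rw [e2]; decide)))⟩
  · rcases hcases (θ (xa 0)) with e2|e2|e2|e2|e2|e2|e2|e2
    · exact absurd (θ.injective ((e2.trans (by decide : (a 0 : Q) = 1)).trans (map_one θ).symm)) (by decide)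
    · exact ⟨be, a 1, Or.inr (Or.inl (aut_ext_gen (by rw [e1]; decide) (by rw [e2]; decide)))⟩
    · have h2 : θ (a 2) = 1 := by
        rw [show (a 2 : Q) = xa 0 * xa 0 from by decide, map_mul, e2]; decide
      exact absurd (θ.injective (h2.trans (map_one θ).symm)) (by decide)
    · exact ⟨be, a 0, Or.inr (Or.inl (aut_ext_gen (by rw [e1]; decide) (by rw [e2]; decide)))⟩
    · exact ⟨(1 : MulAut Q), xa 1, Or.inr (Or.inr (aut_ext_gen (by rw [e1]; decide) (by rw [e2]; decide)))⟩
    · have h3 : θ (a 3) = θ (xa 0) := by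
        rw [show (a 3 : Q) = a 1 * (a 1 * a 1) from by decide, map_mul, map_mul, e1, e2]; decide
      exact absurd (θ.injective h3) (by decide)
    · exact ⟨(1 : MulAut Q), a 0, Or.inr (Or.inr (aut_ext_gen (by rw [e1]; decide) (by rw [e2]; decide)))⟩
    · exact absurd (θ.injective (e1.trans e2.symm)) (by decide)
section Generic

variable {N : Type*} [Group N]

/-- pointwise conjugation identity propagated to all integer powers -/
lemma key_pow (τ : MulAut N) (c : N)
    (u : N ⋊[zpowersHom (MulAut N) τ] Multiplicative ℤ)
    (hu : ∀ x : N, u * inl x * u⁻¹ = inl (c⁻¹ * τ x * c))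
    (θ : MulAut N) (σ : MulAut N)
    (h : ∀ x, σ (θ x) = c⁻¹ * τ (σ x) * c) :
    ∀ (m : ℤ) (x : N),
      (inl (σ ((θ ^ m) x)) : N ⋊[zpowersHom (MulAut N) τ] Multiplicative ℤ)
        = u ^ m * inl (σ x) * (u ^ m)⁻¹ := by
  have hgen : ∀ x : N, (inl (σ (θ x)) : N ⋊[zpowersHom (MulAut N) τ] Multiplicative ℤ)
      = u * inl (σ x) * u⁻¹ := by
    intro x; rw [hu, h]
  have hgen' : ∀ x : N, (inl (σ (θ⁻¹ x)) : N ⋊[zpowersHom (MulAut N) τ] Multiplicative ℤ)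
      = u⁻¹ * inl (σ x) * u := by
    intro x
    have := hgen (θ⁻¹ x)
    rw [MulAut.apply_inv_self] at this
    rw [this]; group
  intro m
  induction m using Int.induction_on with
  | zero => simp
  | succ k ih =>
    intro x
    have hx : (θ ^ ((k : ℤ) + 1)) x = (θ ^ (k : ℤ)) (θ x) := by
      rw [zpow_add_one]; rfl
    rw [hx, ih (θ x), hgen x]
    rw [zpow_add_one]
    group
  | pred k ih =>
    intro x
    have hx : (θ ^ (-(k : ℤ) - 1)) x = (θ ^ (-(k : ℤ))) (θ⁻¹ x) := by
      rw [zpow_sub_one]; rfl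
    rw [hx, ih (θ⁻¹ x), hgen' x]
    rw [zpow_sub_one]
    group

def mkHom (θ τ : MulAut N) (σ : MulAut N) (c : N)
    (h : ∀ x, σ (θ x) = c⁻¹ * τ (σ x) * c) :
    (N ⋊[zpowersHom (MulAut N) θ] Multiplicative ℤ) →*
      (N ⋊[zpowersHom (MulAut N) τ] Multiplicative ℤ) :=
  lift (inl.comp σ.toMonoidHom)
    (zpowersHom _ ((inl c⁻¹ : N ⋊[zpowersHom (MulAut N) τ] Multiplicative ℤ) * inr (ofAdd 1)))
    (by
      have hu : ∀ x : N,
          ((inl c⁻¹ : N ⋊[zpowersHom (MulAut N) τ] Multiplicative ℤ) * inr (ofAdd 1))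
            * inl x * ((inl c⁻¹ : N ⋊[zpowersHom (MulAut N) τ] Multiplicative ℤ)
              * inr (ofAdd 1))⁻¹ = inl (c⁻¹ * τ x * c) := by
        intro x
        have h1 : (inr (ofAdd 1) : N ⋊[zpowersHom (MulAut N) τ] Multiplicative ℤ)
            * inl x * (inr (ofAdd 1))⁻¹ = inl (τ x) := by
          rw [← map_inv, ← inl_aut]
          congr 1
        have h2 : ((inl c⁻¹ : N ⋊[zpowersHom (MulAut N) τ] Multiplicative ℤ) * inr (ofAdd 1))
            * inl x * ((inl c⁻¹ : N ⋊[zpowersHom (MulAut N) τ] Multiplicative ℤ)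
              * inr (ofAdd 1))⁻¹
            = inl c⁻¹ * ((inr (ofAdd 1) : N ⋊[zpowersHom (MulAut N) τ] Multiplicative ℤ)
                * inl x * (inr (ofAdd 1))⁻¹) * (inl c⁻¹)⁻¹ := by group
        rw [h2, h1, ← map_inv, ← map_mul, ← map_mul, inv_inv]
      intro g
      refine MonoidHom.ext fun x => ?_
      simp only [MonoidHom.comp_apply, MulEquiv.coe_toMonoidHom, MulAut.conj_apply,
        zpowersHom_apply]
      exact key_pow τ c _ hu θ σ h (toAdd g) x)

@[simp]
lemma mkHom_inl (θ τ : MulAut N) (σ : MulAut N) (c : N)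
    (h : ∀ x, σ (θ x) = c⁻¹ * τ (σ x) * c) (x : N) :
    mkHom θ τ σ c h (inl x) = inl (σ x) := by
  simp [mkHom]

lemma mkHom_inr1 (θ τ : MulAut N) (σ : MulAut N) (c : N)
    (h : ∀ x, σ (θ x) = c⁻¹ * τ (σ x) * c) :
    mkHom θ τ σ c h (inr (ofAdd 1)) = inl c⁻¹ * inr (ofAdd 1) := by
  simp [mkHom, zpowersHom_apply]

lemma iso_of_rel (θ τ : MulAut N) (σ : MulAut N) (c : N)
    (h : θ = σ⁻¹ * MulAut.conj c⁻¹ * τ * σ) :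
    Nonempty ((N ⋊[zpowersHom (MulAut N) θ] Multiplicative ℤ) ≃*
      (N ⋊[zpowersHom (MulAut N) τ] Multiplicative ℤ)) := by
  have h1 : ∀ x, σ (θ x) = c⁻¹ * τ (σ x) * c := by
    intro x
    have e : θ x = σ.symm (c⁻¹ * τ (σ x) * (c⁻¹)⁻¹) := by rw [h]; rfl
    rw [e, MulEquiv.apply_symm_apply, inv_inv]
  have hτ : τ = MulAut.conj c * σ * θ * σ⁻¹ := by
    rw [h]; group
    simp [zpow_neg_one, ← map_mul]
  have h2 : ∀ x, σ⁻¹ (τ x) = ((σ⁻¹ c)⁻¹)⁻¹ * θ (σ⁻¹ x) * (σ⁻¹ c)⁻¹ := by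
    intro x
    have e : τ x = c * σ (θ (σ⁻¹ x)) * c⁻¹ := by rw [hτ]; rfl
    rw [e]
    simp only [map_mul, map_inv, inv_inv, MulAut.inv_def, MulEquiv.symm_apply_apply]
  refine ⟨MonoidHom.toMulEquiv (mkHom θ τ σ c h1) (mkHom τ θ σ⁻¹ ((σ⁻¹ c)⁻¹) h2) ?_ ?_⟩
  · apply SemidirectProduct.hom_ext
    · refine MonoidHom.ext fun x => ?_
      simp only [MonoidHom.comp_apply, MonoidHom.id_apply, mkHom_inl]
      rw [MulAut.inv_def, MulEquiv.symm_apply_apply]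
    · apply MonoidHom.ext_mint
      simp only [MonoidHom.comp_apply, MonoidHom.id_apply, mkHom_inr1, map_mul, mkHom_inl]
      rw [inv_inv, ← mul_assoc, ← map_mul, ← map_mul, inv_mul_cancel, map_one, map_one, one_mul]
  · apply SemidirectProduct.hom_ext
    · refine MonoidHom.ext fun x => ?_
      simp only [MonoidHom.comp_apply, MonoidHom.id_apply, mkHom_inl]
      rw [MulAut.inv_def, MulEquiv.apply_symm_apply]
    · apply MonoidHom.ext_mint
      simp only [MonoidHom.comp_apply, MonoidHom.id_apply, mkHom_inr1, map_mul, mkHom_inl]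
      rw [inv_inv, MulAut.inv_def, MulEquiv.apply_symm_apply, ← mul_assoc, ← map_mul,
        mul_inv_cancel, map_one, one_mul]

def trivIso : (N ⋊[zpowersHom (MulAut N) (1 : MulAut N)] Multiplicative ℤ) ≃*
    N × Multiplicative ℤ where
  toFun x := (x.left, x.right)
  invFun p := ⟨p.1, p.2⟩
  left_inv := fun ⟨n, g⟩ => rfl
  right_inv := fun p => rfl
  map_mul' a b := by
    have : a * b = ⟨a.left * (zpowersHom (MulAut N) 1 a.right) b.left, a.right * b.right⟩ :=
      rfl
    rw [this]
    simp [zpowersHom_apply]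

end Generic
section Counting

variable {N : Type*} [Group N]

lemma pow_fix {H : Type*} [Monoid H] (f : N →* H) (θ : MulAut N)
    (hf : ∀ x, f (θ x) = f x) : ∀ (m : ℤ) (x : N), f ((θ ^ m) x) = f x := by
  intro m
  induction m using Int.induction_on with
  | zero => intro x; simp
  | succ k ih =>
    intro x
    rw [show (θ ^ ((k : ℤ) + 1)) x = (θ ^ (k : ℤ)) (θ x) from by rw [zpow_add_one]; rfl,
      ih, hf]
  | pred k ih =>
    intro x
    rw [show (θ ^ (-(k : ℤ) - 1)) x = (θ ^ (-(k : ℤ))) (θ⁻¹ x) from by rw [zpow_sub_one]; rfl,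
      ih]
    have h := hf (θ⁻¹ x)
    rw [MulAut.apply_inv_self] at h
    exact h.symm

def homEquiv (θ : MulAut N) (M' : Type*) [CommGroup M'] :
    ((N ⋊[zpowersHom (MulAut N) θ] Multiplicative ℤ) →* M') ≃
      {f : N →* M' // ∀ x, f (θ x) = f x} × M' where
  toFun φ :=
    (⟨φ.comp inl, fun x => by
      have h := inl_aut (φ := zpowersHom (MulAut N) θ) (ofAdd 1) x
      have h2 : (zpowersHom (MulAut N) θ (ofAdd 1)) x = θ x := by
        simp [zpowersHom_apply]
      rw [h2] at h
      simp only [MonoidHom.comp_apply]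
      have h3 : φ (inr ((ofAdd 1) : Multiplicative ℤ)⁻¹) = (φ (inr (ofAdd 1)))⁻¹ := by
        rw [map_inv, map_inv]
      rw [h, map_mul, map_mul, h3, mul_comm (φ (inr (ofAdd 1))) (φ (inl x)),
        mul_inv_cancel_right]⟩,
      φ (inr (ofAdd 1)))
  invFun p := lift p.1.1 (zpowersHom _ p.2)
    (by
      intro g
      refine MonoidHom.ext fun x => ?_
      simp only [MonoidHom.comp_apply, MulEquiv.coe_toMonoidHom, MulAut.conj_apply,
        zpowersHom_apply]
      rw [pow_fix p.1.1 θ p.1.2 (toAdd g) x, mul_comm (p.2 ^ toAdd g) (p.1.1 x),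
        mul_inv_cancel_right])
  left_inv φ := by
    apply SemidirectProduct.hom_ext
    · exact lift_comp_inl _ _ _
    · apply MonoidHom.ext_mint
      simp [zpowersHom_apply]
  right_inv p := by
    refine Prod.ext ?_ ?_
    · exact Subtype.ext (lift_comp_inl _ _ _)
    · simp [zpowersHom_apply]

lemma card_hom_congr {G H : Type*} [Group G] [Group H] (e : G ≃* H) (M' : Type*)
    [CommGroup M'] : Nat.card (G →* M') = Nat.card (H →* M') :=
  Nat.card_congr
    ⟨fun f => f.comp e.symm.toMonoidHom, fun f => f.comp e.toMonoidHom,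
      fun f => by ext x; simp, fun f => by ext x; simp⟩

end Counting

abbrev M : Type := Multiplicative (ZMod 2)

def chiI : Q →* M where
  toFun x := match x with
    | .a k => ofAdd (ZMod.castHom (by norm_num : (2:ℕ) ∣ 2 * 2) (ZMod 2) k)
    | .xa k => ofAdd (ZMod.castHom (by norm_num : (2:ℕ) ∣ 2 * 2) (ZMod 2) k)
  map_one' := by decide
  map_mul' := by decide

def chiJ : Q →* M where
  toFun x := match x with
    | .a _ => 1
    | .xa _ => ofAdd 1
  map_one' := by decide
  map_mul' := by decide

def chiK : Q →* M where
  toFun x := match x with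
    | .a k => ofAdd (ZMod.castHom (by norm_num : (2:ℕ) ∣ 2 * 2) (ZMod 2) k)
    | .xa k => ofAdd (ZMod.castHom (by norm_num : (2:ℕ) ∣ 2 * 2) (ZMod 2) k + 1)
  map_one' := by decide
  map_mul' := by decide

lemma hM : ∀ u : M, u = 1 ∨ u = ofAdd 1 := by decide

/-- homs fixed by the trivial automorphism: all four of them -/
def S1equiv : {f : Q →* M // ∀ x, f ((1 : MulAut Q) x) = f x} ≃ M × M where
  toFun f := (f.1 (a 1), f.1 (xa 0))
  invFun p :=
    if p.1 = 1 then
      (if p.2 = 1 then ⟨1, fun _ => rfl⟩ else ⟨chiJ, fun _ => rfl⟩)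
    else
      (if p.2 = 1 then ⟨chiI, fun _ => rfl⟩ else ⟨chiK, fun _ => rfl⟩)
  left_inv f := by
    rcases hM (f.1 (a 1)) with h1 | h1 <;> rcases hM (f.1 (xa 0)) with h2 | h2 <;>
      simp only [h1, h2, reduceIte, show (ofAdd 1 : M) ≠ 1 from by decide, if_false,
        if_true] <;>
      exact Subtype.ext (hom_ext_gen (by rw [h1]; decide) (by rw [h2]; decide))
  right_inv p := by
    obtain ⟨s, t⟩ := p
    rcases hM s with rfl | rfl <;> rcases hM t with rfl | rfl <;>
      simp only [reduceIte, show (ofAdd 1 : M) ≠ 1 from by decide, if_false, if_true] <;>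
      exact Prod.ext (by decide) (by decide)

lemma Sa_unique : ∀ f : {f : Q →* M // ∀ x, f (ae x) = f x},
    f = ⟨1, fun _ => by simp⟩ := by
  rintro ⟨f, hf⟩
  have e1 : f (xa 0) = f (a 1) := by
    have := hf (a 1); rwa [show ae (a 1) = xa 0 from by decide] at this
  have e2 : f (xa 3) = f (xa 0) := by
    have := hf (xa 0); rwa [show ae (xa 0) = xa 3 from by decide] at this
  have e3 : f (xa 3) = f (a 1) * f (xa 0) := by
    rw [show (xa 3 : Q) = a 1 * xa 0 from by decide, map_mul]
  have ha : f (a 1) = 1 := by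
    have : f (a 1) * f (xa 0) = 1 * f (xa 0) := by
      rw [← e3, e2, one_mul]
    exact mul_right_cancel this
  have hx : f (xa 0) = 1 := by rw [e1, ha]
  exact Subtype.ext (hom_ext_gen (by rw [ha]; rfl) (by rw [hx]; rfl))

def Sbequiv : {f : Q →* M // ∀ x, f (be x) = f x} ≃ M where
  toFun f := f.1 (a 1)
  invFun t := if t = 1 then ⟨1, fun _ => by simp⟩ else ⟨chiI, by decide⟩
  left_inv f := by
    have hx : f.1 (xa 0) = 1 := by
      have e1 : f.1 (xa 3) = f.1 (a 1) := by
        have := f.2 (a 1); rwa [show be (a 1) = xa 3 from by decide] at this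
      have e3 : f.1 (xa 3) = f.1 (a 1) * f.1 (xa 0) := by
        rw [show (xa 3 : Q) = a 1 * xa 0 from by decide, map_mul]
      have : f.1 (a 1) * f.1 (xa 0) = f.1 (a 1) * 1 := by
        rw [← e3, e1, mul_one]
      exact mul_left_cancel this
    rcases hM (f.1 (a 1)) with h1 | h1 <;>
      simp only [h1, reduceIte, show (ofAdd 1 : M) ≠ 1 from by decide, if_false, if_true] <;>
      exact Subtype.ext (hom_ext_gen (by rw [h1]; decide) (by rw [hx]; decide))
  right_inv t := by
    rcases hM t with rfl | rfl <;>
      simp only [reduceIte, show (ofAdd 1 : M) ≠ 1 from by decide, if_false, if_true] <;>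
      decide

lemma card_hom_1 :
    Nat.card ((Q ⋊[zpowersHom (MulAut Q) (1 : MulAut Q)] Multiplicative ℤ) →* M) = 8 := by
  rw [Nat.card_congr ((homEquiv 1 M).trans (Equiv.prodCongr S1equiv (Equiv.refl M)))]
  rw [Nat.card_eq_fintype_card]
  decide

lemma card_hom_a :
    Nat.card ((Q ⋊[zpowersHom (MulAut Q) ae] Multiplicative ℤ) →* M) = 2 := by
  letI hu : Unique {f : Q →* M // ∀ x, f (ae x) = f x} :=
    { default := ⟨1, fun _ => by simp⟩, uniq := Sa_unique }
  rw [Nat.card_congr ((homEquiv ae M).trans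
    (Equiv.prodCongr (Equiv.equivPUnit.{_, 1} _) (Equiv.refl M)))]
  rw [Nat.card_eq_fintype_card]
  decide

lemma card_hom_b :
    Nat.card ((Q ⋊[zpowersHom (MulAut Q) be] Multiplicative ℤ) →* M) = 4 := by
  rw [Nat.card_congr ((homEquiv be M).trans (Equiv.prodCongr Sbequiv (Equiv.refl M)))]
  rw [Nat.card_eq_fintype_card]
  decide
end Stmt11

open Stmt11 in
/-- Up to isomorphism there are exactly three semidirect products `Q₈ ⋊ ℤ`:
the direct product `Q₈ × ℤ`, the product `Q₈ ⋊_α ℤ` where `α(1)` cyclically permutes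
`i, j, k = i*j`, and the product `Q₈ ⋊_β ℤ` where `β(1)` sends `i ↦ k` and `j ↦ j⁻¹`.
In particular every `Q₈ ⋊_θ ℤ` is isomorphic to one of these three, and the three are
pairwise non-isomorphic. -/
theorem stmt_11 :
    ∃ α β : MulAut (QuaternionGroup 2),
      (∃ i j : QuaternionGroup 2, orderOf i = 4 ∧ orderOf j = 4 ∧
        j * i * j⁻¹ = i⁻¹ ∧ j ^ 2 = i ^ 2 ∧
        α i = j ∧ α j = i * j ∧ β i = i * j ∧ β j = j⁻¹) ∧
      (∀ θ : MulAut (QuaternionGroup 2),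
        Nonempty ((QuaternionGroup 2 ⋊[zpowersHom (MulAut (QuaternionGroup 2)) θ]
            Multiplicative ℤ) ≃* QuaternionGroup 2 × Multiplicative ℤ) ∨
        Nonempty ((QuaternionGroup 2 ⋊[zpowersHom (MulAut (QuaternionGroup 2)) θ]
            Multiplicative ℤ) ≃*
          (QuaternionGroup 2 ⋊[zpowersHom (MulAut (QuaternionGroup 2)) α]
            Multiplicative ℤ)) ∨
        Nonempty ((QuaternionGroup 2 ⋊[zpowersHom (MulAut (QuaternionGroup 2)) θ]
            Multiplicative ℤ) ≃*
          (QuaternionGroup 2 ⋊[zpowersHom (MulAut (QuaternionGroup 2)) β]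
            Multiplicative ℤ))) ∧
      ¬ Nonempty ((QuaternionGroup 2 × Multiplicative ℤ) ≃*
          (QuaternionGroup 2 ⋊[zpowersHom (MulAut (QuaternionGroup 2)) α]
            Multiplicative ℤ)) ∧
      ¬ Nonempty ((QuaternionGroup 2 × Multiplicative ℤ) ≃*
          (QuaternionGroup 2 ⋊[zpowersHom (MulAut (QuaternionGroup 2)) β]
            Multiplicative ℤ)) ∧
      ¬ Nonempty ((QuaternionGroup 2 ⋊[zpowersHom (MulAut (QuaternionGroup 2)) α]
            Multiplicative ℤ) ≃*
          (QuaternionGroup 2 ⋊[zpowersHom (MulAut (QuaternionGroup 2)) β]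
            Multiplicative ℤ)) := by
  refine ⟨ae, be, ⟨QuaternionGroup.a 1, QuaternionGroup.xa 0, ?_, ?_,
    by decide, by decide, by decide, by decide, by decide, by decide⟩, ?_, ?_, ?_, ?_⟩
  · have := QuaternionGroup.orderOf_a_one (n := 2)
    simp only [show (2:ℕ)*2 = 4 from rfl] at this
    exact this
  · exact QuaternionGroup.orderOf_xa 0
  · intro θ
    obtain ⟨σ, c, h | h | h⟩ := classify θ
    · obtain ⟨e⟩ := iso_of_rel θ 1 σ c h
      exact Or.inl ⟨e.trans trivIso⟩
    · exact Or.inr (Or.inl (iso_of_rel θ ae σ c h))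
    · exact Or.inr (Or.inr (iso_of_rel θ be σ c h))
  · rintro ⟨e⟩
    have h := card_hom_congr ((trivIso (N := Q)).trans e) M
    rw [card_hom_1, card_hom_a] at h
    norm_num at h
  · rintro ⟨e⟩
    have h := card_hom_congr ((trivIso (N := Q)).trans e) M
    rw [card_hom_1, card_hom_b] at h
    norm_num at h
  · rintro ⟨e⟩
    have h := card_hom_congr e M
    rw [card_hom_a, card_hom_b] at h
    norm_num at h
end

section
/- Consider the two amalgamated products K₁ and K₂ of two copies of the generalized quaternion group Q₁₆ over Q₈ given by presentations K₁ = ⟨x, y, a, b | x⁴ = y², a⁴ = b², yxy⁻¹ = x⁻¹, bab⁻¹ = a⁻¹, x² = a², y = b⟩ and K₂ = ⟨x, y, a, b | x⁴ = y², a⁴ = b², yxy⁻¹ = x⁻¹, bab⁻¹ = a⁻¹, x² = b, y = a²b⟩. Then K₁ ≅ ℤ ⋊ Q₁₆ (with t = xa⁻¹ generating the normal ℤ, inverted by x and a and centralized by y and b), and K₁ is not isomorphic to K₂. -/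
open QuaternionGroup

/-- Relations of `K₁ = ⟨x, y, a, b | x⁴ = y², a⁴ = b², yxy⁻¹ = x⁻¹, bab⁻¹ = a⁻¹,
x² = a², y = b⟩`, with generators `x = 0`, `y = 1`, `a = 2`, `b = 3`. -/
def k1Rels : Set (FreeGroup (Fin 4)) :=
  {FreeGroup.of 0 ^ 4 * (FreeGroup.of 1 ^ 2)⁻¹,
   FreeGroup.of 2 ^ 4 * (FreeGroup.of 3 ^ 2)⁻¹,
   FreeGroup.of 1 * FreeGroup.of 0 * (FreeGroup.of 1)⁻¹ * FreeGroup.of 0,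
   FreeGroup.of 3 * FreeGroup.of 2 * (FreeGroup.of 3)⁻¹ * FreeGroup.of 2,
   FreeGroup.of 0 ^ 2 * (FreeGroup.of 2 ^ 2)⁻¹,
   FreeGroup.of 1 * (FreeGroup.of 3)⁻¹}

/-- Relations of `K₂ = ⟨x, y, a, b | x⁴ = y², a⁴ = b², yxy⁻¹ = x⁻¹, bab⁻¹ = a⁻¹,
x² = b, y = a²b⟩`, with generators `x = 0`, `y = 1`, `a = 2`, `b = 3`. -/
def k2Rels : Set (FreeGroup (Fin 4)) :=
  {FreeGroup.of 0 ^ 4 * (FreeGroup.of 1 ^ 2)⁻¹,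
   FreeGroup.of 2 ^ 4 * (FreeGroup.of 3 ^ 2)⁻¹,
   FreeGroup.of 1 * FreeGroup.of 0 * (FreeGroup.of 1)⁻¹ * FreeGroup.of 0,
   FreeGroup.of 3 * FreeGroup.of 2 * (FreeGroup.of 3)⁻¹ * FreeGroup.of 2,
   FreeGroup.of 0 ^ 2 * (FreeGroup.of 3)⁻¹,
   FreeGroup.of 1 * (FreeGroup.of 2 ^ 2 * FreeGroup.of 3)⁻¹}

/- ===== parity and psi ===== -/
abbrev QQ16 := QuaternionGroup 4
abbrev MZ := Multiplicative ℤ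

def par : QQ16 → ZMod 2
  | .a i => ZMod.castHom (show 2 ∣ 2 * 4 by norm_num) (ZMod 2) i
  | .xa i => ZMod.castHom (show 2 ∣ 2 * 4 by norm_num) (ZMod 2) i

lemma par_a' (i : ZMod (2 * 4)) : par (.a i) = ZMod.castHom (show 2 ∣ 2 * 4 by norm_num) (ZMod 2) i := rfl
lemma par_xa' (i : ZMod (2 * 4)) : par (.xa i) = ZMod.castHom (show 2 ∣ 2 * 4 by norm_num) (ZMod 2) i := rfl

lemma par_mul (g h : QQ16) : par (g * h) = par g + par h := by
  have h4 : ((4 : ℕ) : ZMod 2) = 0 := by decide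
  rcases g with i | i <;> rcases h with j | j <;>
    simp only [a_mul_a, a_mul_xa, xa_mul_a, xa_mul_xa, par_a', par_xa', map_add, map_sub,
      map_natCast, h4, CharTwo.sub_eq_add] <;>
    ring

def invAut : MulAut MZ := MulEquiv.inv MZ

def myPsi : QQ16 →* MulAut MZ where
  toFun g := if par g = 0 then 1 else invAut
  map_one' := by
    have : (1 : QQ16) = .a 0 := rfl
    show (if par (QuaternionGroup.a 0 : QQ16) = 0 then (1 : MulAut MZ) else invAut) = 1
    rw [if_pos (by decide)]
  map_mul' g h := by
    show (if par (g*h) = 0 then _ else _) = _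
    rw [par_mul]
    rcases (by decide : ∀ x : ZMod 2, x = 0 ∨ x = 1) (par g) with hg | hg <;>
      rcases (by decide : ∀ x : ZMod 2, x = 0 ∨ x = 1) (par h) with hh | hh <;>
      simp [hg, hh, show (1 + 1 : ZMod 2) = 0 by decide] <;>
      · ext t; simp [invAut]

lemma myPsi_apply (g : QQ16) (t : MZ) : myPsi g t = if par g = 0 then t else t⁻¹ := by
  by_cases h : par g = 0 <;> simp [myPsi, h, invAut]

lemma par_eq_zero_iff (g : QQ16) :
    g ∈ Subgroup.closure ({QuaternionGroup.a 2, QuaternionGroup.xa 0} : Set QQ16) ↔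
      par g = 0 := by
  set S : Set QQ16 := {QuaternionGroup.a 2, QuaternionGroup.xa 0}
  constructor
  · intro hg
    refine Subgroup.closure_induction ?_ (by decide) ?_ ?_ hg
    · rintro x (rfl | rfl) <;> decide
    · intro x y _ _ hx hy; rw [par_mul, hx, hy]; decide
    · intro x _ hx
      have := par_mul x x⁻¹
      simp [mul_inv_cancel, hx] at this
      rw [← this]; decide
  · intro hg
    have ha2 : QuaternionGroup.a 2 ∈ Subgroup.closure S := Subgroup.subset_closure (by left; rfl)
    have hxa0 : QuaternionGroup.xa 0 ∈ Subgroup.closure S := Subgroup.subset_closure (by right; rfl)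
    rcases g with i | i
    · have h4 : ∀ j : ZMod (2*4), par (QuaternionGroup.a j) = 0 → j = 0 ∨ j = 2 ∨ j = 4 ∨ j = 6 := by decide
      rcases h4 i hg with rfl | rfl | rfl | rfl
      · exact (Subgroup.closure S).one_mem
      · exact ha2
      · rw [show (QuaternionGroup.a 4 : QQ16) = QuaternionGroup.a 2 * QuaternionGroup.a 2 by decide]; exact (Subgroup.closure S).mul_mem ha2 ha2
      · rw [show (QuaternionGroup.a 6 : QQ16) = QuaternionGroup.a 2 * QuaternionGroup.a 2 * QuaternionGroup.a 2 by decide]; exact (Subgroup.closure S).mul_mem ((Subgroup.closure S).mul_mem ha2 ha2) ha2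
    · have h4 : ∀ j : ZMod (2*4), par (QuaternionGroup.xa j) = 0 → j = 0 ∨ j = 2 ∨ j = 4 ∨ j = 6 := by decide
      have key : ∀ j : ZMod (2*4), QuaternionGroup.xa j = QuaternionGroup.xa 0 * QuaternionGroup.a j := by decide
      rcases h4 i hg with rfl | rfl | rfl | rfl <;> rw [key] <;>
        refine (Subgroup.closure S).mul_mem hxa0 ?_
      · exact (Subgroup.closure S).one_mem'
      · exact ha2
      · rw [show (QuaternionGroup.a 4 : QQ16) = QuaternionGroup.a 2 * QuaternionGroup.a 2 by decide]; exact (Subgroup.closure S).mul_mem ha2 ha2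
      · rw [show (QuaternionGroup.a 6 : QQ16) = QuaternionGroup.a 2 * QuaternionGroup.a 2 * QuaternionGroup.a 2 by decide]; exact (Subgroup.closure S).mul_mem ((Subgroup.closure S).mul_mem ha2 ha2) ha2


/- ===== abstract group lemmas ===== -/
section Abstract
variable {G : Type*} [Group G] (X A B : G)
variable (hA8 : A ^ (8 : ℕ) = 1) (hB2 : A ^ 4 = B ^ 2) (hBA : B * A * B⁻¹ = A⁻¹)
variable (hBX : B * X * B⁻¹ = X⁻¹) (hX2 : X ^ 2 = A ^ 2)

include hA8 in
lemma A_zpow_eq (m n : ℤ) (h : (m : ZMod (2*4)) = n) : A ^ m = A ^ n := by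
  rw [ZMod.intCast_eq_intCast_iff'] at h
  obtain ⟨k, hk⟩ : ((2*4 : ℕ) : ℤ) ∣ n - m := Int.ModEq.dvd h
  have hm : m = n + 8 * (-k) := by push_cast at hk; omega
  have h8 : A ^ (8 : ℤ) = 1 := by
    rw [show (8:ℤ) = ((8:ℕ):ℤ) from rfl, zpow_natCast, hA8]
  rw [hm, zpow_add, zpow_mul, h8, one_zpow, mul_one]

include hBA in
lemma B_mul_A_zpow (m : ℤ) : B * A ^ m = A ^ (-m) * B := by
  have h : B * A ^ m * B⁻¹ = (B * A * B⁻¹) ^ m := conj_zpow.symm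
  rw [hBA, inv_zpow, ← zpow_neg] at h
  rw [mul_inv_eq_iff_eq_mul] at h
  exact h

include hBA in
lemma A_zpow_mul_B (m : ℤ) : A ^ m * B = B * A ^ (-m) := by
  rw [B_mul_A_zpow A B hBA, neg_neg]

/-- value map for the hom Q₁₆ →* G -/
def qMap : QuaternionGroup 4 → G
  | .a i => A ^ (i.val : ℤ)
  | .xa i => B * A ^ (i.val : ℤ)

lemma val_coe (i : ZMod (2*4)) : (((i.val : ℤ)) : ZMod (2*4)) = i := by
  push_cast
  simp [ZMod.natCast_val, ZMod.cast_id]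

lemma val_coe' (i : ZMod (2*4)) : ((i.val : ℕ) : ZMod (2*4)) = i := by
  simp [ZMod.natCast_val, ZMod.cast_id]

include hA8 hB2 hBA in
lemma qMap_mul (g h : QuaternionGroup 4) :
    qMap A B (g * h) = qMap A B g * qMap A B h := by
  have h4 : A ^ ((4:ℤ)) = B ^ (2:ℕ) := by
    rw [show (4:ℤ) = ((4:ℕ):ℤ) from rfl, zpow_natCast, hB2]
  rcases g with i | i <;> rcases h with j | j <;>
    simp only [qMap, a_mul_a, a_mul_xa, xa_mul_a, xa_mul_xa]
  · rw [← zpow_add]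
    exact A_zpow_eq A hA8 _ _ (by rw [val_coe]; push_cast; rw [val_coe', val_coe'])
  · rw [← mul_assoc, A_zpow_mul_B A B hBA, mul_assoc, ← zpow_add]
    exact congrArg (B * ·) (A_zpow_eq A hA8 _ _ (by rw [val_coe]; push_cast; rw [val_coe', val_coe']; ring))
  · rw [mul_assoc, ← zpow_add]
    exact congrArg (B * ·) (A_zpow_eq A hA8 _ _ (by rw [val_coe]; push_cast; rw [val_coe', val_coe']))
  · symm
    calc B * A ^ (i.val:ℤ) * (B * A ^ (j.val:ℤ))
        = B * (A ^ (i.val:ℤ) * B) * A ^ (j.val:ℤ) := by group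
      _ = B * (B * A ^ (-(i.val:ℤ))) * A ^ (j.val:ℤ) := by rw [A_zpow_mul_B A B hBA]
      _ = B ^ (2:ℕ) * A ^ (-(i.val:ℤ) + (j.val:ℤ)) := by rw [zpow_add, sq]; group
      _ = A ^ ((4:ℤ)) * A ^ (-(i.val:ℤ) + (j.val:ℤ)) := by rw [h4]
      _ = A ^ ((4:ℤ) + (-(i.val:ℤ) + (j.val:ℤ))) := by rw [zpow_add, zpow_add]; group
      _ = A ^ ((((4:ZMod (2*4)) + j - i).val : ℤ)) := by
          refine (A_zpow_eq A hA8 _ _ ?_).symm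
          rw [val_coe]; push_cast; rw [val_coe', val_coe']; ring

include hA8 hB2 hBA in
/-- the hom Q₁₆ →* G -/
def qHom : QuaternionGroup 4 →* G where
  toFun := qMap A B
  map_one' := by
    show qMap A B (.a 0) = 1
    simp [qMap]
  map_mul' := qMap_mul A B hA8 hB2 hBA

include hX2 in
lemma conj_A_T : A * (X * A⁻¹) * A⁻¹ = (X * A⁻¹)⁻¹ := by
  calc A * (X * A⁻¹) * A⁻¹ = A * X * (A^2)⁻¹ := by group
    _ = A * X * (X^2)⁻¹ := by rw [hX2]
    _ = (X * A⁻¹)⁻¹ := by group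

include hBX hX2 hBA in
lemma conj_B_T : B * (X * A⁻¹) * B⁻¹ = X * A⁻¹ := by
  have hBAinv : B * A⁻¹ * B⁻¹ = A := by
    have h : B * A⁻¹ * B⁻¹ = (B * A * B⁻¹)⁻¹ := by group
    rw [h, hBA, inv_inv]
  calc B * (X * A⁻¹) * B⁻¹ = (B * X * B⁻¹) * (B * A⁻¹ * B⁻¹) := by group
    _ = X⁻¹ * A := by rw [hBX, hBAinv]
    _ = X⁻¹ * (X^2) * A⁻¹ := by rw [hX2]; group
    _ = X * A⁻¹ := by group

include hX2 in
lemma conj_A_zpow_T (m : ℤ) :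
    A ^ m * (X * A⁻¹) * (A ^ m)⁻¹ = if (m : ZMod 2) = 0 then X * A⁻¹ else (X * A⁻¹)⁻¹ := by
  set T := X * A⁻¹ with hT
  have hAT := conj_A_T X A hX2
  rw [← hT] at hAT
  have hAA : A ^ (2:ℤ) = A * A := by rw [show (2:ℤ) = 1+1 from rfl, zpow_add, zpow_one]
  have hsq : A ^ (2:ℤ) * T = T * A ^ (2:ℤ) := by
    have h1 : A * T = T⁻¹ * A := by rw [← hAT]; group
    have h2 : A * T⁻¹ = T * A := by
      have e1 : A * T⁻¹ * A⁻¹ = (A * T * A⁻¹)⁻¹ := by group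
      rw [hAT, inv_inv] at e1
      rw [mul_inv_eq_iff_eq_mul] at e1
      exact e1
    calc A ^ (2:ℤ) * T = A * (A * T) := by rw [hAA, mul_assoc]
      _ = A * (T⁻¹ * A) := by rw [h1]
      _ = (A * T⁻¹) * A := by rw [mul_assoc]
      _ = T * A * A := by rw [h2]
      _ = T * A ^ (2:ℤ) := by rw [hAA, mul_assoc]
  have heven : ∀ q : ℤ, A ^ (2*q) * T * (A ^ (2*q))⁻¹ = T := by
    intro q
    have hc : Commute (A ^ (2:ℤ)) T := hsq
    have hc2 : Commute (A ^ (2*q)) T := by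
      rw [zpow_mul]
      exact (hc.zpow_left q)
    rw [hc2.eq]; group
  rcases Int.even_or_odd m with ⟨q, hq⟩ | ⟨q, hq⟩
  · have hm : (m : ZMod 2) = 0 := by
      rw [hq]; push_cast; exact CharTwo.add_self_eq_zero _
    rw [if_pos hm, hq, show q + q = 2 * q by ring, heven]
  · have hm : (m : ZMod 2) ≠ 0 := by
      rw [hq]; push_cast; rw [(by decide : (2:ZMod 2) = 0)]; simp
    rw [if_neg hm, hq]
    have h3 : A ^ (2*q+1) = A ^ (2*q) * A := by rw [zpow_add, zpow_one]
    rw [h3]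
    calc A ^ (2*q) * A * T * (A ^ (2*q) * A)⁻¹
        = A ^ (2*q) * (A * T * A⁻¹) * (A ^ (2*q))⁻¹ := by group
      _ = A ^ (2*q) * T⁻¹ * (A ^ (2*q))⁻¹ := by rw [hAT]
      _ = (A ^ (2*q) * T * (A ^ (2*q))⁻¹)⁻¹ := by group
      _ = T⁻¹ := by rw [heven]
end Abstract
/- ===== K1 relations ===== -/
namespace K1
abbrev G := PresentedGroup k1Rels
def X : G := PresentedGroup.of 0
def Y : G := PresentedGroup.of 1
def A : G := PresentedGroup.of 2
def B : G := PresentedGroup.of 3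

lemma rel_of_mem {r : FreeGroup (Fin 4)} (h : r ∈ k1Rels) : PresentedGroup.mk k1Rels r = 1 :=
  (QuotientGroup.eq_one_iff _).mpr (Subgroup.subset_normalClosure h)

lemma rel1 : X ^ 4 = Y ^ 2 := by
  have := rel_of_mem (show FreeGroup.of 0 ^ 4 * (FreeGroup.of 1 ^ 2)⁻¹ ∈ k1Rels by
    simp [k1Rels])
  simp only [map_mul, map_pow, map_inv] at this
  rw [mul_inv_eq_one] at this
  exact this

lemma rel2 : A ^ 4 = B ^ 2 := by
  have := rel_of_mem (show FreeGroup.of 2 ^ 4 * (FreeGroup.of 3 ^ 2)⁻¹ ∈ k1Rels by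
    simp [k1Rels])
  simp only [map_mul, map_pow, map_inv] at this
  rw [mul_inv_eq_one] at this
  exact this

lemma rel3 : Y * X * Y⁻¹ = X⁻¹ := by
  have := rel_of_mem (show FreeGroup.of 1 * FreeGroup.of 0 * (FreeGroup.of 1)⁻¹ * FreeGroup.of 0 ∈ k1Rels by
    simp [k1Rels])
  simp only [map_mul, map_inv] at this
  rw [mul_eq_one_iff_eq_inv] at this
  exact this

lemma rel4 : B * A * B⁻¹ = A⁻¹ := by
  have := rel_of_mem (show FreeGroup.of 3 * FreeGroup.of 2 * (FreeGroup.of 3)⁻¹ * FreeGroup.of 2 ∈ k1Rels by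
    simp [k1Rels])
  simp only [map_mul, map_inv] at this
  rw [mul_eq_one_iff_eq_inv] at this
  exact this

lemma rel5 : X ^ 2 = A ^ 2 := by
  have := rel_of_mem (show FreeGroup.of 0 ^ 2 * (FreeGroup.of 2 ^ 2)⁻¹ ∈ k1Rels by
    simp [k1Rels])
  simp only [map_mul, map_pow, map_inv] at this
  rw [mul_inv_eq_one] at this
  exact this

lemma rel6 : Y = B := by
  have := rel_of_mem (show FreeGroup.of 1 * (FreeGroup.of 3)⁻¹ ∈ k1Rels by
    simp [k1Rels])
  simp only [map_mul, map_inv] at this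
  rw [mul_inv_eq_one] at this
  exact this

lemma B_mul_A : B * A = A⁻¹ * B := by
  have := rel4
  group at this ⊢
  rw [← this]
  group

lemma A_pow_eight : A ^ (8 : ℕ) = 1 := by
  have h1 : B * A ^ 4 * B⁻¹ = A⁻¹ ^ 4 := by
    rw [← rel4, conj_pow]
  rw [rel2] at h1
  have h2 : B * B ^ 2 * B⁻¹ = B ^ 2 := by group
  rw [h2, ← rel2] at h1
  rw [show (8:ℕ) = 4 + 4 from rfl, pow_add]
  nth_rewrite 1 [h1]
  rw [inv_pow, inv_mul_cancel]

lemma A_zpow_eight : A ^ (8 : ℤ) = 1 := by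
  rw [show (8:ℤ) = ((8:ℕ):ℤ) from rfl, zpow_natCast, A_pow_eight]

/-- `A^m` depends only on `m` mod 8. -/
lemma A_zpow_eq (m n : ℤ) (h : (m : ZMod 8) = n) : A ^ m = A ^ n := by
  rw [ZMod.intCast_eq_intCast_iff'] at h
  obtain ⟨k, hk⟩ : (8:ℤ) ∣ n - m := Int.ModEq.dvd h
  have : m = n + 8 * (-k) := by omega
  rw [this, zpow_add, zpow_mul, A_zpow_eight, one_zpow, mul_one]

lemma B_mul_A_zpow (m : ℤ) : B * A ^ m = A ^ (-m) * B := by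
  have : B * A ^ m * B⁻¹ = (B * A * B⁻¹) ^ m := conj_zpow.symm
  rw [rel4, inv_zpow, ← zpow_neg] at this
  rw [mul_inv_eq_iff_eq_mul] at this
  exact this
end K1
section HomCount
variable {α : Type*} {H : Type*} [Group H] (rels : Set (FreeGroup α))

/-- Homs out of a presented group = functions on generators killing the relators. -/
def homEquiv : (PresentedGroup rels →* H) ≃ {f : α → H // ∀ r ∈ rels, FreeGroup.lift f r = 1} where
  toFun φ := ⟨fun x => φ (PresentedGroup.of x), by
    intro r hr
    have key : (FreeGroup.lift fun x => φ (PresentedGroup.of x)) r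
        = φ (PresentedGroup.mk rels r) := by
      have : (FreeGroup.lift fun x => φ (PresentedGroup.of x))
          = φ.comp (PresentedGroup.mk rels) := by
        ext x
        simp [PresentedGroup.of]
      rw [this]; rfl
    have h1 : PresentedGroup.mk rels r = 1 :=
      (QuotientGroup.eq_one_iff _).mpr (Subgroup.subset_normalClosure hr)
    rw [key, h1, map_one]⟩
  invFun f := PresentedGroup.toGroup f.2
  left_inv φ :=
    DFunLike.ext _ _ fun x => (PresentedGroup.toGroup.unique _ φ (fun _ => rfl)).symm
  right_inv f := by
    ext x
    exact PresentedGroup.toGroup.of f.2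

end HomCount

abbrev C2 := Multiplicative (ZMod 2)

variable {H : Type*} [Group H]

lemma k1_cond (f : Fin 4 → H) :
    (∀ r ∈ k1Rels, FreeGroup.lift f r = 1) ↔
      (f 0^4 * ((f 1)^2)⁻¹ = 1 ∧ f 2^4 * ((f 3)^2)⁻¹ = 1 ∧
       f 1 * f 0 * (f 1)⁻¹ * f 0 = 1 ∧ f 3 * f 2 * (f 3)⁻¹ * f 2 = 1 ∧
       f 0^2 * ((f 2)^2)⁻¹ = 1 ∧ f 1 * (f 3)⁻¹ = 1) := by
  simp [k1Rels]

lemma k2_cond (f : Fin 4 → H) :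
    (∀ r ∈ k2Rels, FreeGroup.lift f r = 1) ↔
      (f 0^4 * ((f 1)^2)⁻¹ = 1 ∧ f 2^4 * ((f 3)^2)⁻¹ = 1 ∧
       f 1 * f 0 * (f 1)⁻¹ * f 0 = 1 ∧ f 3 * f 2 * (f 3)⁻¹ * f 2 = 1 ∧
       f 0^2 * ((f 3))⁻¹ = 1 ∧ f 1 * ((f 2)^2 * f 3)⁻¹ = 1) := by
  simp [k2Rels]

instance d1 : DecidablePred (fun f : Fin 4 → C2 => ∀ r ∈ k1Rels, FreeGroup.lift f r = 1) :=
  fun f => decidable_of_iff' _ (k1_cond f)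

instance d2 : DecidablePred (fun f : Fin 4 → C2 => ∀ r ∈ k2Rels, FreeGroup.lift f r = 1) :=
  fun f => decidable_of_iff' _ (k2_cond f)

lemma card1 : Fintype.card {f : Fin 4 → C2 // ∀ r ∈ k1Rels, FreeGroup.lift f r = 1} = 8 := by
  decide

lemma card2 : Fintype.card {f : Fin 4 → C2 // ∀ r ∈ k2Rels, FreeGroup.lift f r = 1} = 4 := by
  decide

noncomputable instance f1 : Fintype (PresentedGroup k1Rels →* C2) :=
  Fintype.ofEquiv _ (homEquiv k1Rels).symm

noncomputable instance f2 : Fintype (PresentedGroup k2Rels →* C2) :=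
  Fintype.ofEquiv _ (homEquiv k2Rels).symm

lemma not_iso : ¬ Nonempty (PresentedGroup k1Rels ≃* PresentedGroup k2Rels) := by
  rintro ⟨e⟩
  have hcard : Fintype.card (PresentedGroup k1Rels →* C2)
      = Fintype.card (PresentedGroup k2Rels →* C2) := by
    refine Fintype.card_congr ⟨fun φ => φ.comp e.symm.toMonoidHom, fun φ => φ.comp e.toMonoidHom,
      fun φ => ?_, fun φ => ?_⟩ <;>
    · ext x
      simp
  rw [Fintype.card_congr (homEquiv k1Rels), card1] at hcard
  rw [Fintype.card_congr (homEquiv k2Rels), card2] at hcard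
  norm_num at hcard

/- ===== the semidirect product isomorphism ===== -/
namespace K1

lemma hBX : B * X * B⁻¹ = X⁻¹ := by rw [← rel6]; exact rel3

/-- generator images in the semidirect product -/
def fSD : Fin 4 → (MZ ⋊[myPsi] QQ16) :=
  ![⟨Multiplicative.ofAdd 1, .a 1⟩, ⟨1, .xa 0⟩, ⟨1, .a 1⟩, ⟨1, .xa 0⟩]

lemma fSD_rels : ∀ r ∈ k1Rels, FreeGroup.lift fSD r = 1 := by
  rw [k1_cond]
  refine ⟨?_, ?_, ?_, ?_, ?_, ?_⟩ <;>
  · ext <;>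
      simp [fSD, pow_succ, SemidirectProduct.mul_left, SemidirectProduct.mul_right,
        SemidirectProduct.inv_left, SemidirectProduct.inv_right, myPsi_apply] <;>
      decide

/-- the forward hom -/
def Phi : G →* (MZ ⋊[myPsi] QQ16) := PresentedGroup.toGroup fSD_rels

/-- the hom from Q₁₆ -/
def f2 : QQ16 →* G := qHom A B A_pow_eight rel2 rel4

lemma f2_a (i : ZMod (2*4)) : f2 (.a i) = A ^ (i.val : ℤ) := rfl
lemma f2_xa (i : ZMod (2*4)) : f2 (.xa i) = B * A ^ (i.val : ℤ) := rfl

lemma par_cast (i : ZMod (2*4)) : (((i.val:ℤ)) : ZMod 2) = par (.a i) := by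
  push_cast
  rw [par_a', ZMod.castHom_apply, ZMod.natCast_val]

lemma hcompat : ∀ g : QQ16,
    (zpowersHom G (X * A⁻¹)).comp (myPsi g).toMonoidHom
      = (MulAut.conj (f2 g)).toMonoidHom.comp (zpowersHom G (X * A⁻¹)) := by
  intro g
  apply MonoidHom.ext_mint
  simp only [MonoidHom.comp_apply, MulEquiv.coe_toMonoidHom, zpowersHom_apply, MulAut.conj_apply,
    myPsi_apply]
  have htoAdd : Multiplicative.toAdd (Multiplicative.ofAdd (1:ℤ)) = 1 := rfl
  have htoAdd' : Multiplicative.toAdd (Multiplicative.ofAdd (1:ℤ))⁻¹ = -1 := rfl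
  have hBT := conj_B_T (X := X) (A := A) (B := B) (hBA := rel4) (hBX := hBX) (hX2 := rel5)
  rw [htoAdd, zpow_one]
  rcases g with i | i
  · rw [f2_a]
    rw [conj_A_zpow_T X A rel5 (i.val:ℤ), par_cast]
    by_cases h : par (QuaternionGroup.a i) = 0
    · rw [if_pos h, if_pos h, htoAdd, zpow_one]
    · rw [if_neg h, if_neg h, htoAdd', zpow_neg, zpow_one]
  · rw [f2_xa]
    have key : (B * A ^ (i.val:ℤ)) * (X * A⁻¹) * (B * A ^ (i.val:ℤ))⁻¹
        = B * (A ^ (i.val:ℤ) * (X * A⁻¹) * (A ^ (i.val:ℤ))⁻¹) * B⁻¹ := by group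
    rw [key, conj_A_zpow_T X A rel5 (i.val:ℤ), par_cast]
    have hp : par (QuaternionGroup.xa i) = par (QuaternionGroup.a i) := rfl
    rw [hp] at *
    by_cases h : par (QuaternionGroup.a i) = 0
    · rw [if_pos h, if_pos h, htoAdd, zpow_one, hBT]
    · rw [if_neg h, if_neg h, htoAdd', zpow_neg, zpow_one]
      have hconj : B * (X * A⁻¹)⁻¹ * B⁻¹ = (B * (X * A⁻¹) * B⁻¹)⁻¹ := by group
      rw [hconj, hBT]

/-- the backward hom -/
def Xi : (MZ ⋊[myPsi] QQ16) →* G :=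
  SemidirectProduct.lift (zpowersHom G (X * A⁻¹)) f2 hcompat

lemma Phi_f2 (g : QQ16) : Phi (f2 g) = SemidirectProduct.inr g := by
  have hPA : Phi A = SemidirectProduct.inr (QuaternionGroup.a 1 : QQ16) := by
    show Phi (PresentedGroup.of 2) = _
    rw [Phi, PresentedGroup.toGroup.of]
    rfl
  have hPB : Phi B = SemidirectProduct.inr (QuaternionGroup.xa 0 : QQ16) := by
    show Phi (PresentedGroup.of 3) = _
    rw [Phi, PresentedGroup.toGroup.of]
    rfl
  rcases g with i | i
  · rw [f2_a, map_zpow, hPA, ← map_zpow]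
    congr 1
    rw [zpow_natCast, a_one_pow, val_coe']
  · rw [f2_xa, map_mul, map_zpow, hPA, hPB, ← map_zpow, ← map_mul]
    congr 1
    rw [zpow_natCast, a_one_pow, val_coe', xa_mul_a, zero_add]

lemma Phi_Xi : Phi.comp Xi = MonoidHom.id _ := by
  apply SemidirectProduct.hom_ext
  · apply MonoidHom.ext_mint
    simp only [MonoidHom.comp_apply, MonoidHom.id_apply, Xi, SemidirectProduct.lift_inl,
      zpowersHom_apply]
    rw [show Multiplicative.toAdd (Multiplicative.ofAdd (1:ℤ)) = 1 from rfl, zpow_one]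
    have hX : Phi X = ⟨Multiplicative.ofAdd 1, .a 1⟩ := by
      rw [Phi]; exact PresentedGroup.toGroup.of _
    have hA : Phi A = ⟨1, .a 1⟩ := by
      rw [Phi]; exact PresentedGroup.toGroup.of _
    rw [map_mul, map_inv, hX, hA]
    ext <;>
      simp only [SemidirectProduct.mul_left, SemidirectProduct.mul_right,
        SemidirectProduct.inv_left, SemidirectProduct.inv_right, myPsi_apply,
        SemidirectProduct.left_inl, SemidirectProduct.right_inl] <;> decide
  · refine MonoidHom.ext fun g => ?_
    simp only [MonoidHom.comp_apply, MonoidHom.id_apply, Xi, SemidirectProduct.lift_inr]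
    exact Phi_f2 g

lemma Xi_Phi : Xi.comp Phi = MonoidHom.id _ := by
  apply PresentedGroup.ext
  intro x
  have key : ∀ x : Fin 4, Phi (PresentedGroup.of x) = fSD x := fun x =>
    PresentedGroup.toGroup.of _
  fin_cases x <;>
    simp only [MonoidHom.comp_apply, MonoidHom.id_apply, key]
  · have : (fSD 0) = SemidirectProduct.inl (Multiplicative.ofAdd 1)
        * SemidirectProduct.inr (QuaternionGroup.a 1 : QQ16) := by
      ext <;>
        simp only [SemidirectProduct.mul_left, SemidirectProduct.mul_right, myPsi_apply,
          SemidirectProduct.left_inl, SemidirectProduct.right_inl, map_one,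
          SemidirectProduct.left_inr, SemidirectProduct.right_inr] <;> decide
    rw [show fSD ⟨0, by norm_num⟩ = fSD 0 from rfl, this, map_mul, Xi]
    rw [SemidirectProduct.lift_inl, SemidirectProduct.lift_inr]
    simp only [zpowersHom_apply]
    rw [show Multiplicative.toAdd (Multiplicative.ofAdd (1:ℤ)) = 1 from rfl, zpow_one, f2_a]
    rw [show (((1 : ZMod (2*4)).val : ℤ)) = 1 by decide, zpow_one]
    show X * A⁻¹ * A = PresentedGroup.of 0
    group
    rfl
  · have : (fSD 1) = SemidirectProduct.inr (QuaternionGroup.xa 0 : QQ16) := rfl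
    rw [show fSD ⟨1, by norm_num⟩ = fSD 1 from rfl, this, Xi, SemidirectProduct.lift_inr, f2_xa]
    rw [show (((0 : ZMod (2*4)).val : ℤ)) = 0 by decide, zpow_zero, mul_one]
    exact rel6.symm
  · have : (fSD 2) = SemidirectProduct.inr (QuaternionGroup.a 1 : QQ16) := rfl
    rw [show fSD ⟨2, by norm_num⟩ = fSD 2 from rfl, this, Xi, SemidirectProduct.lift_inr, f2_a]
    rw [show (((1 : ZMod (2*4)).val : ℤ)) = 1 by decide, zpow_one]
    rfl
  · have : (fSD 3) = SemidirectProduct.inr (QuaternionGroup.xa 0 : QQ16) := rfl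
    rw [show fSD ⟨3, by norm_num⟩ = fSD 3 from rfl, this, Xi, SemidirectProduct.lift_inr, f2_xa]
    rw [show (((0 : ZMod (2*4)).val : ℤ)) = 0 by decide, zpow_zero, mul_one]
    rfl

/-- the isomorphism -/
def theEquiv : G ≃* (MZ ⋊[myPsi] QQ16) :=
  MonoidHom.toMulEquiv Phi Xi Xi_Phi Phi_Xi

lemma theEquiv_T :
    theEquiv (PresentedGroup.of 0 * (PresentedGroup.of 2)⁻¹)
      = SemidirectProduct.inl (Multiplicative.ofAdd 1) := by
  show Phi (X * A⁻¹) = _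
  have hX : Phi X = ⟨Multiplicative.ofAdd 1, .a 1⟩ := by
    rw [Phi]; exact PresentedGroup.toGroup.of _
  have hA : Phi A = ⟨1, .a 1⟩ := by
    rw [Phi]; exact PresentedGroup.toGroup.of _
  rw [map_mul, map_inv, hX, hA]
  ext <;>
    simp only [SemidirectProduct.mul_left, SemidirectProduct.mul_right,
      SemidirectProduct.inv_left, SemidirectProduct.inv_right, myPsi_apply,
      SemidirectProduct.left_inl, SemidirectProduct.right_inl] <;> decide

end K1


/-- `K₁ ≅ ℤ ⋊ Q₁₆`, where `t = x a⁻¹` generates the normal `ℤ` factor and conjugation by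
an element of `Q₁₆` (= `QuaternionGroup 4`, with `a = a 1`, `b = xa 0`) fixes `t` when it
lies in the subgroup `⟨a², b⟩ ≅ Q₈` and inverts `t` otherwise; and `K₁` is not isomorphic
to `K₂`. -/
theorem stmt_17 :
    (∃ ψ : QuaternionGroup 4 →* MulAut (Multiplicative ℤ),
      (∀ g : QuaternionGroup 4,
        (g ∈ Subgroup.closure
            ({QuaternionGroup.a 2, QuaternionGroup.xa 0} : Set (QuaternionGroup 4)) →
          ∀ t, ψ g t = t) ∧
        (g ∉ Subgroup.closure
            ({QuaternionGroup.a 2, QuaternionGroup.xa 0} : Set (QuaternionGroup 4)) →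
          ∀ t, ψ g t = t⁻¹)) ∧
      ∃ e : PresentedGroup k1Rels ≃* Multiplicative ℤ ⋊[ψ] QuaternionGroup 4,
        e (PresentedGroup.of 0 * (PresentedGroup.of 2)⁻¹) =
          SemidirectProduct.inl (Multiplicative.ofAdd 1)) ∧
    ¬ Nonempty (PresentedGroup k1Rels ≃* PresentedGroup k2Rels) := by
  refine ⟨⟨myPsi, ?_, K1.theEquiv, K1.theEquiv_T⟩, not_iso⟩
  intro g
  constructor
  · intro hg t
    rw [myPsi_apply, if_pos ((par_eq_zero_iff g).mp hg)]
  · intro hg t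
    rw [myPsi_apply, if_neg (fun h => hg ((par_eq_zero_iff g).mpr h))]
end
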